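/- arXiv:2009.02821 — 8 statements merged into one kernel-verified Lean document; each statement's English description precedes it below -/
import Mathlib

section
/- Let W : ℝ → ℝ be C¹ and satisfy the growth assumptions with constants C₁ > 0, C₂, C₃, C₃', C₄ ∈ ℝ and exponent p ≥ 2. Let η₁ > 0 and η₂ < p·η₁. Then there exist ε₀ > 0 and constants A₁ > 0 and A₂ > 0, depending only on η₁, η₂, p, C₁, C₂, C₃, C₄, such that for every ε with 0 < ε ≤ ε₀ and every u ∈ ℝ one has η₁·W'(u)·u − η₂·W(u) − η₁²·ε²·u² ≥ A₁·|u|^p − A₂. -/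
/-- Lower bound `η₁ W'(u)u − η₂ W(u) − η₁² ε² u² ≥ A₁|u|^p − A₂` for
potentials satisfying the growth assumptions, with `A₁, A₂ > 0` and small `ε`. -/
theorem stmt_0 (W : ℝ → ℝ) (hW : ContDiff ℝ 1 W)
    (p C₁ C₂ C₃ C₃' C₄ : ℝ) (hp : 2 ≤ p) (hC₁ : 0 < C₁)
    (hWlow : ∀ u : ℝ, C₁ * |u| ^ p + C₂ ≤ W u)
    (hWup : ∀ u : ℝ, W u ≤ C₁ * |u| ^ p + C₃)
    (hW' : ∀ u : ℝ, |deriv W u| ≤ C₁ * p * |u| ^ (p - 1) + C₃')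
    (hW'u : ∀ u : ℝ, C₁ * p * |u| ^ p + C₄ ≤ deriv W u * u)
    (η₁ η₂ : ℝ) (hη₁ : 0 < η₁) (hη₂ : η₂ < p * η₁) :
    ∃ ε₀ > (0 : ℝ), ∃ A₁ > (0 : ℝ), ∃ A₂ > (0 : ℝ), ∀ ε : ℝ, 0 < ε → ε ≤ ε₀ → ∀ u : ℝ,
      A₁ * |u| ^ p - A₂ ≤ η₁ * (deriv W u * u) - η₂ * W u - η₁ ^ 2 * ε ^ 2 * u ^ 2 := by
  set δ : ℝ := (p * η₁ - η₂) * C₁ with hδdef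
  have hδ : 0 < δ := mul_pos (by linarith) hC₁
  refine ⟨Real.sqrt (δ / 2) / η₁, by positivity, δ / 2, by positivity,
    |η₁ * C₄| + |η₂| * (|C₂| + |C₃|) + δ / 2 + 1, by positivity, ?_⟩
  intro ε hε hεle u
  have hεη : η₁ ^ 2 * ε ^ 2 ≤ δ / 2 := by
    have h1 : η₁ * ε ≤ Real.sqrt (δ / 2) := by
      rw [le_div_iff₀ hη₁] at hεle
      linarith
    have h2 : (η₁ * ε) ^ 2 ≤ Real.sqrt (δ / 2) ^ 2 :=
      pow_le_pow_left₀ (by positivity) h1 2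
    rw [Real.sq_sqrt (by positivity)] at h2
    nlinarith
  have hup : (0:ℝ) ≤ |u| ^ p := Real.rpow_nonneg (abs_nonneg u) p
  have h1 : η₁ * (C₁ * p * |u| ^ p + C₄) ≤ η₁ * (deriv W u * u) :=
    mul_le_mul_of_nonneg_left (hW'u u) hη₁.le
  have h2 : η₂ * W u ≤ η₂ * C₁ * |u| ^ p + |η₂| * (|C₂| + |C₃|) := by
    rcases le_or_gt 0 η₂ with h | h
    · have := mul_le_mul_of_nonneg_left (hWup u) h
      have hη₂3 : η₂ * C₃ ≤ |η₂| * (|C₂| + |C₃|) := by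
        have h3 : η₂ * C₃ ≤ |η₂| * |C₃| := by
          calc η₂ * C₃ ≤ |η₂ * C₃| := le_abs_self _
          _ = |η₂| * |C₃| := abs_mul _ _
        nlinarith [abs_nonneg η₂, abs_nonneg C₂]
      nlinarith
    · have := mul_le_mul_of_nonpos_left (hWlow u) h.le
      have hη₂2 : η₂ * C₂ ≤ |η₂| * (|C₂| + |C₃|) := by
        have h3 : η₂ * C₂ ≤ |η₂ * C₂| := le_abs_self _
        rw [abs_mul] at h3
        nlinarith [abs_nonneg η₂, abs_nonneg C₃]
      nlinarith
  have h3 : η₁ ^ 2 * ε ^ 2 * u ^ 2 ≤ δ / 2 * |u| ^ p + δ / 2 := by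
    rcases le_or_gt 1 |u| with h | h
    · have hsq : u ^ 2 ≤ |u| ^ p := by
        have : |u| ^ (2:ℝ) ≤ |u| ^ p := Real.rpow_le_rpow_of_exponent_le h hp
        rwa [show (2:ℝ) = ((2:ℕ):ℝ) by norm_num, Real.rpow_natCast, sq_abs] at this
      nlinarith [sq_nonneg u, sq_nonneg ε, sq_nonneg η₁]
    · have hsq : u ^ 2 ≤ 1 := by nlinarith [sq_abs u, abs_nonneg u]
      nlinarith [sq_nonneg u, sq_nonneg (η₁ * ε)]
  have habs : -|η₁ * C₄| ≤ η₁ * C₄ := neg_abs_le _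
  nlinarith [h1, h2, h3]
end

section
/- Let n ≥ 1, let Ω_ε ⊆ ℝⁿ be an open set of finite Lebesgue measure, let W : ℝ → ℝ be C¹ satisfying the growth assumptions with constants C₁ > 0, C₂, C₃, C₃', C₄ ∈ ℝ and exponent p ≥ 2, and let η₁ > 0, η₂ < p·η₁. Then there exist ε₀ > 0 and constants A₁ > 0, A₂ > 0, depending only on η₁, η₂, p, C₁, C₂, C₃, C₄, such that for every ε with 0 < ε ≤ ε₀ and every C² function u : ℝⁿ → ℝ with compact support contained in Ω_ε, one has F_ε|_{Ω_ε}(u) ≥ ∫_{Ω_ε} [ (1/(4ε))·(−ε·Δu + ε^{−1}·W'(u))² + (η₁·ε/2)·|∇u|² + (A₁/ε)·|u|^p ] dx − (A₂/ε)·|Ω_ε|, where |Ω_ε| denotes the Lebesgue measure of Ω_ε. -/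
open MeasureTheory

/-- Partial derivative of `u` in the `i`-th coordinate direction. -/
noncomputable def pd {n : ℕ} (i : Fin n) (u : EuclideanSpace ℝ (Fin n) → ℝ)
    (x : EuclideanSpace ℝ (Fin n)) : ℝ :=
  fderiv ℝ u x (EuclideanSpace.single i 1)

/-- Laplacian of `u : ℝⁿ → ℝ`, as the sum of second partial derivatives. -/
noncomputable def lap {n : ℕ} (u : EuclideanSpace ℝ (Fin n) → ℝ)
    (x : EuclideanSpace ℝ (Fin n)) : ℝ :=
  ∑ i, pd i (fun y => pd i u y) x

/-- Squared gradient `|∇u|²`. -/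
noncomputable def gradSq {n : ℕ} (u : EuclideanSpace ℝ (Fin n) → ℝ)
    (x : EuclideanSpace ℝ (Fin n)) : ℝ :=
  ∑ i, (pd i u x) ^ 2

/-- The Functionalized Cahn–Hilliard energy of `u` restricted to `D`. -/
noncomputable def FCH {n : ℕ} (ε η₁ η₂ : ℝ) (W : ℝ → ℝ)
    (D : Set (EuclideanSpace ℝ (Fin n))) (u : EuclideanSpace ℝ (Fin n) → ℝ) : ℝ :=
  ∫ x in D, ((1 / (2 * ε)) * (-(ε * lap u x) + ε⁻¹ * deriv W (u x)) ^ 2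
    - ((η₁ * ε / 2) * gradSq u x + (η₂ / ε) * W (u x)))

set_option maxHeartbeats 1000000 in
/-- lower bound for the FCH energy restricted to a finite-measure open set. -/
theorem stmt_1 (n : ℕ) (hn : 1 ≤ n) (Ωε : Set (EuclideanSpace ℝ (Fin n)))
    (hΩo : IsOpen Ωε) (hΩfin : volume Ωε < ⊤)
    (W : ℝ → ℝ) (hW : ContDiff ℝ 1 W)
    (p C₁ C₂ C₃ C₃' C₄ : ℝ) (hp : 2 ≤ p) (hC₁ : 0 < C₁)
    (hWlow : ∀ v : ℝ, C₁ * |v| ^ p + C₂ ≤ W v)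
    (hWup : ∀ v : ℝ, W v ≤ C₁ * |v| ^ p + C₃)
    (hW' : ∀ v : ℝ, |deriv W v| ≤ C₁ * p * |v| ^ (p - 1) + C₃')
    (hW'u : ∀ v : ℝ, C₁ * p * |v| ^ p + C₄ ≤ deriv W v * v)
    (η₁ η₂ : ℝ) (hη₁ : 0 < η₁) (hη₂ : η₂ < p * η₁) :
    ∃ ε₀ > (0 : ℝ), ∃ A₁ > (0 : ℝ), ∃ A₂ > (0 : ℝ), ∀ ε : ℝ, 0 < ε → ε ≤ ε₀ →
      ∀ u : EuclideanSpace ℝ (Fin n) → ℝ, ContDiff ℝ 2 u → HasCompactSupport u →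
        tsupport u ⊆ Ωε →
        (∫ x in Ωε, ((1 / (4 * ε)) * (-(ε * lap u x) + ε⁻¹ * deriv W (u x)) ^ 2
            + (η₁ * ε / 2) * gradSq u x + (A₁ / ε) * |u x| ^ p))
          - (A₂ / ε) * (volume Ωε).toReal
        ≤ FCH ε η₁ η₂ W Ωε u := by
  classical
  have hsub : 0 < p * η₁ - η₂ := sub_pos.2 hη₂
  set M : ℝ := max |C₂| |C₃| with hM
  have hM0 : 0 ≤ M := le_trans (abs_nonneg C₂) (le_max_left _ _)
  set A₁ : ℝ := C₁ * (p * η₁ - η₂) / 2 with hA₁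
  have hA₁pos : 0 < A₁ := by rw [hA₁]; positivity
  set A₂ : ℝ := A₁ + |η₂| * M + η₁ * |C₄| + 1 with hA₂
  have hA₂pos : 0 < A₂ := by
    have h1 : 0 ≤ |η₂| * M := mul_nonneg (abs_nonneg _) hM0
    have h2 : 0 ≤ η₁ * |C₄| := mul_nonneg hη₁.le (abs_nonneg _)
    rw [hA₂]; linarith
  clear_value M A₁ A₂
  refine ⟨min 1 (A₁ / η₁ ^ 2), lt_min one_pos (by positivity), A₁, hA₁pos, A₂, hA₂pos, ?_⟩
  intro ε hε hεle u hu hcs hsupp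
  have hε1 : ε ≤ 1 := le_trans hεle (min_le_left _ _)
  have hεA : ε * η₁ ^ 2 ≤ A₁ := by
    have h := le_trans hεle (min_le_right _ _)
    rwa [le_div_iff₀ (by positivity)] at h
  have hεne : ε ≠ 0 := ne_of_gt hε
  -- smoothness facts
  have hucont : Continuous u := hu.continuous
  have hudiff : Differentiable ℝ u := hu.differentiable (by norm_num)
  have hpdC : ∀ i : Fin n, ContDiff ℝ 1 (pd i u) := fun i =>
    (hu.fderiv_right (m := 1) (by norm_num)).clm_apply contDiff_const
  have hpdcont : ∀ i : Fin n, Continuous (pd i u) := fun i => (hpdC i).continuous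
  have hpd2cont : ∀ i : Fin n, Continuous (pd i (fun y => pd i u y)) := fun i =>
    (((hpdC i).fderiv_right (m := 0) (by norm_num)).clm_apply contDiff_const).continuous
  have hlapcont : Continuous (lap u) := by
    unfold lap; exact continuous_finset_sum _ (fun i _ => hpd2cont i)
  have hgradcont : Continuous (gradSq u) := by
    unfold gradSq; exact continuous_finset_sum _ (fun i _ => (hpdcont i).pow 2)
  have hWcont : Continuous W := hW.continuous
  have hW'cont : Continuous (deriv W) := hW.continuous_deriv le_rfl
  have habscont : Continuous (fun x => |u x| ^ p) := by
    apply Continuous.rpow_const hucont.abs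
    intro x; right; linarith
  -- vanishing outside the support
  set K := tsupport u with hKdef
  have hKc : IsCompact K := hcs
  have hKcl : IsClosed K := isClosed_tsupport u
  have hu0 : ∀ x ∉ K, u x = 0 := fun x hx => image_eq_zero_of_notMem_tsupport hx
  have hpd0 : ∀ (i : Fin n), ∀ x ∉ K, pd i u x = 0 := by
    intro i x hx
    have h : fderiv ℝ u x = 0 := by
      by_contra h
      exact hx (support_fderiv_subset (𝕜 := ℝ) (f := u) h)
    simp [pd, h]
  have hpdsupp : ∀ i : Fin n, tsupport (pd i u) ⊆ K := by
    intro i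
    apply closure_minimal _ hKcl
    intro x hx
    by_contra hxK
    exact hx (hpd0 i x hxK)
  have hpd20 : ∀ (i : Fin n), ∀ x ∉ K, pd i (fun y => pd i u y) x = 0 := by
    intro i x hx
    have hx' : x ∉ tsupport (pd i u) := fun h => hx (hpdsupp i h)
    have h : fderiv ℝ (pd i u) x = 0 := by
      by_contra h
      exact hx' (support_fderiv_subset (𝕜 := ℝ) (f := pd i u) h)
    show fderiv ℝ (pd i u) x (EuclideanSpace.single i 1) = 0
    rw [h]; rfl
  have hlap0 : ∀ x ∉ K, lap u x = 0 := by
    intro x hx; unfold lap; exact Finset.sum_eq_zero (fun i _ => hpd20 i x hx)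
  have hgrad0 : ∀ x ∉ K, gradSq u x = 0 := by
    intro x hx; unfold gradSq
    exact Finset.sum_eq_zero (fun i _ => by rw [hpd0 i x hx]; ring)
  -- integrability helper
  have hint : ∀ (f : EuclideanSpace ℝ (Fin n) → ℝ) (c : ℝ), Continuous f →
      (∀ x ∉ K, f x = c) → IntegrableOn f Ωε volume := by
    intro f c hf h0
    have h1 : Integrable (fun x => f x - c) volume :=
      (hf.sub continuous_const).integrable_of_hasCompactSupport
        (HasCompactSupport.intro hKc (fun x hx => by show f x - c = 0; rw [h0 x hx]; ring))
    have h2 : IntegrableOn (fun x => (f x - c) + c) Ωε volume :=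
      h1.integrableOn.add (integrableOn_const hΩfin.ne)
    simpa using h2
  have hcptint : ∀ (f : EuclideanSpace ℝ (Fin n) → ℝ), Continuous f →
      (∀ x ∉ K, f x = 0) → Integrable f volume := by
    intro f hf h0
    exact hf.integrable_of_hasCompactSupport (HasCompactSupport.intro hKc h0)
  -- the three integrands
  set Q : EuclideanSpace ℝ (Fin n) → ℝ :=
    fun x => -(ε * lap u x) + ε⁻¹ * deriv W (u x) with hQ
  have hQcont : Continuous Q := ((continuous_const.mul hlapcont).neg).add
    (continuous_const.mul (hW'cont.comp hucont))
  set f₁ : EuclideanSpace ℝ (Fin n) → ℝ :=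
    fun x => (1 / (2 * ε)) * Q x ^ 2 - ((η₁ * ε / 2) * gradSq u x + (η₂ / ε) * W (u x)) with hf₁
  set f₂ : EuclideanSpace ℝ (Fin n) → ℝ :=
    fun x => (1 / (4 * ε)) * Q x ^ 2 + (η₁ * ε / 2) * gradSq u x + (A₁ / ε) * |u x| ^ p with hf₂
  set d : EuclideanSpace ℝ (Fin n) → ℝ :=
    fun x => gradSq u x + u x * lap u x with hd
  have hQ0 : ∀ x ∉ K, Q x = ε⁻¹ * deriv W 0 := by
    intro x hx; rw [hQ]; simp only; rw [hu0 x hx, hlap0 x hx]; ring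
  have hint₁ : IntegrableOn f₁ Ωε volume := by
    apply hint f₁ ((1 / (2 * ε)) * (ε⁻¹ * deriv W 0) ^ 2 - (η₂ / ε) * W 0)
      (((continuous_const.mul (hQcont.pow 2))).sub
        ((continuous_const.mul hgradcont).add (continuous_const.mul (hWcont.comp hucont))))
    intro x hx
    rw [hf₁]; simp only
    rw [hu0 x hx, hgrad0 x hx, hQ0 x hx]; ring
  have hint₂ : IntegrableOn f₂ Ωε volume := by
    apply hint f₂ ((1 / (4 * ε)) * (ε⁻¹ * deriv W 0) ^ 2 + (A₁ / ε) * |(0:ℝ)| ^ p)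
      (((continuous_const.mul (hQcont.pow 2))).add
        (continuous_const.mul hgradcont) |>.add (continuous_const.mul habscont))
    intro x hx
    rw [hf₂]; simp only
    rw [hu0 x hx, hgrad0 x hx, hQ0 x hx]; ring
  have hd0 : ∀ x ∉ K, d x = 0 := by
    intro x hx; rw [hd]; simp only
    rw [hu0 x hx, hgrad0 x hx, hlap0 x hx]; ring
  have hdcont : Continuous d := hgradcont.add (hucont.mul hlapcont)
  have hdint : Integrable d volume := hcptint d hdcont hd0
  -- integration by parts : ∫ d = 0
  have hibp : ∫ x, d x = 0 := by
    have hterm : ∀ i : Fin n, ∫ x, (pd i u x ^ 2 + u x * pd i (fun y => pd i u y) x) = 0 := by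
      intro i
      have hInt1 : Integrable (fun x => pd i u x * pd i u x) volume := by
        apply hcptint _ ((hpdcont i).mul (hpdcont i))
        intro x hx; show pd i u x * pd i u x = 0; rw [hpd0 i x hx]; ring
      have hInt2 : Integrable (fun x => u x * pd i (fun y => pd i u y) x) volume := by
        apply hcptint _ (hucont.mul (hpd2cont i))
        intro x hx; show u x * pd i (fun y => pd i u y) x = 0; rw [hu0 x hx]; ring
      have hInt3 : Integrable (fun x => u x * pd i u x) volume := by
        apply hcptint _ (hucont.mul (hpdcont i))
        intro x hx; show u x * pd i u x = 0; rw [hu0 x hx]; ring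
      have hgdiff : Differentiable ℝ (pd i u) := (hpdC i).differentiable (by norm_num)
      have hibp1 : ∫ x, u x * pd i (fun y => pd i u y) x = - ∫ x, pd i u x * pd i u x :=
        integral_mul_fderiv_eq_neg_fderiv_mul_of_integrable (μ := volume)
          (f := u) (g := pd i u) (v := EuclideanSpace.single i 1)
          hInt1 hInt2 hInt3 (fun x _ => hudiff x) (fun x _ => hgdiff x)
      have hsq : ∀ x, pd i u x ^ 2 = pd i u x * pd i u x := fun x => sq (pd i u x)
      have hInt1' : Integrable (fun x => pd i u x ^ 2) volume := by
        simpa only [sq] using hInt1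
      rw [integral_add hInt1' hInt2, hibp1]
      simp only [sq]
      ring
    have hsum : ∀ x, d x = ∑ i : Fin n, (pd i u x ^ 2 + u x * pd i (fun y => pd i u y) x) := by
      intro x
      rw [hd]; simp only
      unfold gradSq lap
      rw [Finset.sum_add_distrib, Finset.mul_sum]
    have hintterm : ∀ i : Fin n,
        Integrable (fun x => pd i u x ^ 2 + u x * pd i (fun y => pd i u y) x) volume := by
      intro i
      apply hcptint _ (((hpdcont i).pow 2).add (hucont.mul (hpd2cont i)))
      intro x hx; show pd i u x ^ 2 + u x * pd i (fun y => pd i u y) x = 0; rw [hpd0 i x hx, hu0 x hx]; ring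
    calc ∫ x, d x = ∫ x, ∑ i : Fin n, (pd i u x ^ 2 + u x * pd i (fun y => pd i u y) x) := by
          congr 1; ext x; exact hsum x
      _ = ∑ i : Fin n, ∫ x, (pd i u x ^ 2 + u x * pd i (fun y => pd i u y) x) :=
          integral_finset_sum _ (fun i _ => hintterm i)
      _ = 0 := by simp [hterm]
  have hibpΩ : ∫ x in Ωε, d x = 0 := by
    rw [setIntegral_eq_integral_of_forall_compl_eq_zero
      (fun x hx => hd0 x (fun hK => hx (hsupp hK)))]
    exact hibp
  -- pointwise inequality
  have hkeyineq : ∀ t q : ℝ, 0 ≤ (1/4) * q ^ 2 - η₁ * ε * t * q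
      + η₁ * (deriv W t * t) - η₂ * W t - A₁ * |t| ^ p + A₂ := by
    intro t q
    have h4 : 0 ≤ |t| ^ p := Real.rpow_nonneg (abs_nonneg _) p
    have h3 : t ^ 2 ≤ |t| ^ p + 1 := by
      have h2p : |t| ^ (2:ℝ) = t ^ 2 := by
        rw [show (2:ℝ) = ((2:ℕ):ℝ) by norm_num, Real.rpow_natCast, sq_abs]
      rcases le_total (|t|) 1 with h | h
      · have h1 : |t| ^ 2 ≤ 1 := pow_le_one₀ (abs_nonneg t) h
        rw [sq_abs] at h1
        linarith
      · have := Real.rpow_le_rpow_of_exponent_le h hp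
        rw [h2p] at this; linarith
    have h2 : -(η₂ * (C₁ * |t| ^ p)) - |η₂| * M ≤ -(η₂ * W t) := by
      rcases le_total 0 η₂ with h | h
      · rw [abs_of_nonneg h]
        have hup := hWup t
        have hC₃M : C₃ ≤ M := by rw [hM]; exact le_trans (le_abs_self C₃) (le_max_right _ _)
        nlinarith [mul_le_mul_of_nonneg_left hup h, mul_nonneg h (sub_nonneg.2 hC₃M)]
      · rw [abs_of_nonpos h]
        have hlow := hWlow t
        have hC₂M : |C₂| ≤ M := by rw [hM]; exact le_max_left _ _
        nlinarith [mul_le_mul_of_nonneg_left hlow (neg_nonneg.2 h),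
          mul_nonneg (neg_nonneg.2 h) (by linarith [neg_abs_le C₂] : (0:ℝ) ≤ C₂ + M)]
    have haux1 : -(ε ^ 2 * η₁ ^ 2 * t ^ 2) ≤ (1/4) * q ^ 2 - η₁ * ε * t * q := by
      nlinarith [sq_nonneg (q - 2 * (ε * (η₁ * t)))]
    have haux2 : ε ^ 2 * η₁ ^ 2 * t ^ 2 ≤ A₁ * (|t| ^ p + 1) := by
      nlinarith [mul_nonneg (mul_nonneg hε.le (sub_nonneg.2 hε1)) (sq_nonneg (η₁ * t)),
        mul_nonneg (sub_nonneg.2 hεA) (sq_nonneg t),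
        mul_nonneg hA₁pos.le (sub_nonneg.2 h3)]
    have h8 : η₁ * (C₁ * p * |t| ^ p + C₄) ≤ η₁ * (deriv W t * t) :=
      mul_le_mul_of_nonneg_left (hW'u t) hη₁.le
    have hextra : 0 ≤ η₁ * (C₄ + |C₄|) :=
      mul_nonneg hη₁.le (by linarith [neg_abs_le C₄])
    rw [hA₂, hA₁]
    rw [hA₁] at haux2
    linarith [haux1, haux2, h8, h2, h4, hextra]
  have hptwise : ∀ x, f₂ x ≤ f₁ x + (A₂ / ε + η₁ * ε * d x) := by
    intro x
    have hF := hkeyineq (u x) (Q x)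
    have hId : f₁ x + (A₂ / ε + η₁ * ε * d x) - f₂ x
        = ε⁻¹ * ((1/4) * Q x ^ 2 - η₁ * ε * u x * Q x
          + η₁ * (deriv W (u x) * u x) - η₂ * W (u x) - A₁ * |u x| ^ p + A₂) := by
      simp only [hf₁, hf₂, hd, hQ]
      field_simp
      ring
    have h0 : 0 ≤ f₁ x + (A₂ / ε + η₁ * ε * d x) - f₂ x := by
      rw [hId]
      exact mul_nonneg (by positivity) hF
    linarith
  -- assemble
  have hconstint : IntegrableOn (fun _ : EuclideanSpace ℝ (Fin n) => A₂ / ε) Ωε volume :=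
    integrableOn_const hΩfin.ne
  have hdintΩ : IntegrableOn d Ωε volume := hdint.integrableOn
  have hrhsint : IntegrableOn (fun x => f₁ x + (A₂ / ε + η₁ * ε * d x)) Ωε volume :=
    hint₁.add (hconstint.add (hdintΩ.const_mul (η₁ * ε)))
  have hmono : ∫ x in Ωε, f₂ x ≤ ∫ x in Ωε, (f₁ x + (A₂ / ε + η₁ * ε * d x)) :=
    integral_mono hint₂ hrhsint hptwise
  have e1 : ∫ x in Ωε, (f₁ x + (A₂ / ε + η₁ * ε * d x))
      = (∫ x in Ωε, f₁ x) + ∫ x in Ωε, (A₂ / ε + η₁ * ε * d x) :=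
    integral_add hint₁ (hconstint.add (hdintΩ.const_mul (η₁ * ε)))
  have e2 : ∫ x in Ωε, (A₂ / ε + η₁ * ε * d x)
      = (∫ _x in Ωε, (A₂ / ε : ℝ)) + ∫ x in Ωε, η₁ * ε * d x :=
    integral_add hconstint (hdintΩ.const_mul (η₁ * ε))
  have e3 : ∫ _x in Ωε, (A₂ / ε : ℝ) = (A₂ / ε) * (volume Ωε).toReal := by
    rw [setIntegral_const, smul_eq_mul, mul_comm, Measure.real]
  have e4 : ∫ x in Ωε, η₁ * ε * d x = η₁ * ε * ∫ x in Ωε, d x :=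
    integral_const_mul _ _
  have hkey : (∫ x in Ωε, f₂ x) - (A₂ / ε) * (volume Ωε).toReal ≤ ∫ x in Ωε, f₁ x := by
    rw [e1, e2, e3, e4, hibpΩ] at hmono
    linarith
  have hgoalrw : FCH ε η₁ η₂ W Ωε u = ∫ x in Ωε, f₁ x := rfl
  rw [hgoalrw]
  exact hkey
end

section
/- Let n ≥ 2, ℓ > 0, κ₀ > 0, let Q ⊂ ℝ^{n−1} be a bounded open set, and let κ₁, …, κ_{n−1} : Q → ℝ be C¹ functions with |κ_j(s)| ≤ κ₀ and |∂κ_j/∂s_i(s)| ≤ κ₀ for all s ∈ Q and all i, j. Let W : ℝ → ℝ be C¹, M > 0, C > 0, η₁ > 0. Then there exists a constant M₂ > 0, depending only on M, C, κ₀, ℓ, n and η₁, such that the following holds: for every ε with 0 < ε < 1/(2ℓκ₀) and every C² function u : ℝⁿ → ℝ satisfying (a) ‖−ε·Δ̃u + ε^{−1}·W'(u)‖_{L²(Ω₁^ℓ)} ≤ 2√M, (b) ‖∂u/∂z‖_{L²(Ω₁^ℓ)} ≤ √(2M/η₁), and (c) Σ_{j=1}^{n−1} ( ‖∂u/∂s_j‖_{L²(Ω₁^ℓ)}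 + ε·‖∂²u/∂s_j²‖_{L²(Ω₁^ℓ)} ) ≤ C, one has ‖−∂²u/∂z² + W'(u)‖_{L²(Ω₁^ℓ)} ≤ M₂·ε. -/
open MeasureTheory

/-- Tangential partial derivative `∂u/∂s_j` in the product coordinates `(s, z)`. -/
noncomputable def pds {m : ℕ} (j : Fin m) (u : (Fin m → ℝ) × ℝ → ℝ)
    (x : (Fin m → ℝ) × ℝ) : ℝ :=
  fderiv ℝ u x (Pi.single j 1, 0)

/-- Normal partial derivative `∂u/∂z` in the product coordinates `(s, z)`. -/
noncomputable def pdz {m : ℕ} (u : (Fin m → ℝ) × ℝ → ℝ) (x : (Fin m → ℝ) × ℝ) : ℝ :=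
  fderiv ℝ u x (0, 1)

/-- The scaled Laplacian `Δ̃u` in the curvilinear coordinates `(s, z)`. -/
noncomputable def lapTil {m : ℕ} (ε : ℝ) (κ : Fin m → (Fin m → ℝ) → ℝ)
    (u : (Fin m → ℝ) × ℝ → ℝ) (x : (Fin m → ℝ) × ℝ) : ℝ :=
  (∑ j, ((1 + ε * x.2 * κ j x.1)⁻¹) ^ 2 * pds j (fun y => pds j u y) x)
    + ε⁻¹ * ∑ j, κ j x.1 * (1 + ε * x.2 * κ j x.1)⁻¹ * pdz u x
    + (ε⁻¹) ^ 2 * pdz (fun y => pdz u y) x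
    - ε * ∑ j, (fderiv ℝ (κ j) x.1 (Pi.single j 1)) * ((1 + ε * x.2 * κ j x.1)⁻¹) ^ 3 * pds j u x

/-- The `L²` norm of `g` over a set `Ω`. -/
noncomputable def l2norm {m : ℕ} (Ω : Set ((Fin m → ℝ) × ℝ)) (g : (Fin m → ℝ) × ℝ → ℝ) : ℝ :=
  Real.sqrt (∫ x in Ω, (g x) ^ 2)

open scoped ENNReal NNReal

lemma l2norm_eq_toReal {α : Type*} [MeasurableSpace α] (μ : Measure α) {f : α → ℝ}
    (hf : AEStronglyMeasurable f μ) :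
    Real.sqrt (∫ x, (f x) ^ 2 ∂μ) = (eLpNorm f 2 μ).toReal := by
  have h1 : ∫ x, (f x) ^ 2 ∂μ = (∫⁻ x, (‖f x‖₊ : ℝ≥0∞) ^ (2:ℝ) ∂μ).toReal := by
    rw [integral_eq_lintegral_of_nonneg_ae (ae_of_all _ fun x => sq_nonneg (f x))
      ((hf.aemeasurable.pow_const 2).aestronglyMeasurable)]
    congr 1
    refine lintegral_congr fun x => ?_
    rw [← enorm_eq_nnnorm, Real.enorm_eq_ofReal_abs]
    rw [ENNReal.ofReal_rpow_of_nonneg (abs_nonneg _) (by norm_num : (0:ℝ) ≤ 2)]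
    rw [show |f x| ^ (2:ℝ) = |f x| ^ (2:ℕ) from Real.rpow_natCast _ 2 ▸ by norm_num, sq_abs]
  rw [h1, eLpNorm_eq_lintegral_rpow_enorm_toReal (by norm_num) (by norm_num)]
  simp only [ENNReal.toReal_ofNat, enorm_eq_nnnorm]
  rw [← ENNReal.toReal_rpow, Real.sqrt_eq_rpow]

lemma l2norm_eq {m : ℕ} {Ω : Set ((Fin m → ℝ) × ℝ)} {f : (Fin m → ℝ) × ℝ → ℝ}
    (hf : AEStronglyMeasurable f (volume.restrict Ω)) :
    l2norm Ω f = (eLpNorm f 2 (volume.restrict Ω)).toReal :=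
  l2norm_eq_toReal _ hf

lemma eLp_le_scale {α : Type*} [MeasurableSpace α] {μ : Measure α} {Ω : Set α}
    (hΩ : MeasurableSet Ω) {F G : α → ℝ} {c : ℝ} (hc : 0 ≤ c)
    (h : ∀ x ∈ Ω, |F x| ≤ c * |G x|) :
    eLpNorm F 2 (μ.restrict Ω) ≤ ENNReal.ofReal c * eLpNorm G 2 (μ.restrict Ω) := by
  have h1 : eLpNorm F 2 (μ.restrict Ω) ≤ eLpNorm (fun x => c * G x) 2 (μ.restrict Ω) := by
    refine eLpNorm_mono_ae ((ae_restrict_iff' hΩ).2 (ae_of_all _ fun x hx => ?_))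
    simpa [Real.norm_eq_abs, abs_mul, abs_of_nonneg hc] using h x hx
  refine h1.trans_eq ?_
  rw [show (fun x => c * G x) = c • G from rfl, eLpNorm_const_smul]
  rw [Real.enorm_eq_ofReal_abs, abs_of_nonneg hc]

set_option maxHeartbeats 1000000 in
/-- `O(ε)` residual bound for the bilayer equation under enhanced
tangential-derivative bounds. -/
theorem stmt_4 (n : ℕ) (hn : 2 ≤ n) (ℓ κ₀ : ℝ) (hℓ : 0 < ℓ) (hκ₀ : 0 < κ₀)
    (Q : Set (Fin (n - 1) → ℝ)) (hQo : IsOpen Q) (hQb : Bornology.IsBounded Q)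
    (κ : Fin (n - 1) → (Fin (n - 1) → ℝ) → ℝ) (hκ : ∀ j, ContDiff ℝ 1 (κ j))
    (hκb : ∀ j, ∀ s ∈ Q, |κ j s| ≤ κ₀)
    (hκ'b : ∀ i j, ∀ s ∈ Q, |fderiv ℝ (κ j) s (Pi.single i 1)| ≤ κ₀)
    (W : ℝ → ℝ) (hW : ContDiff ℝ 1 W)
    (M C η₁ : ℝ) (hM : 0 < M) (hC : 0 < C) (hη₁ : 0 < η₁) :
    ∃ M₂ > (0 : ℝ), ∀ ε : ℝ, 0 < ε → ε < 1 / (2 * ℓ * κ₀) →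
      ∀ u : (Fin (n - 1) → ℝ) × ℝ → ℝ, ContDiff ℝ 2 u →
      l2norm (Q ×ˢ Set.Ioo (-ℓ) ℓ)
          (fun x => -(ε * lapTil ε κ u x) + ε⁻¹ * deriv W (u x)) ≤ 2 * Real.sqrt M →
      l2norm (Q ×ˢ Set.Ioo (-ℓ) ℓ) (fun x => pdz u x) ≤ Real.sqrt (2 * M / η₁) →
      (∑ j, (l2norm (Q ×ˢ Set.Ioo (-ℓ) ℓ) (fun x => pds j u x)
          + ε * l2norm (Q ×ˢ Set.Ioo (-ℓ) ℓ) (fun x => pds j (fun y => pds j u y) x))) ≤ C →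
      l2norm (Q ×ˢ Set.Ioo (-ℓ) ℓ)
          (fun x => -(pdz (fun y => pdz u y) x) + deriv W (u x)) ≤ M₂ * ε := by
  set K : ℝ := 1 / (2 * ℓ * κ₀) with hK
  have hKpos : 0 < K := by positivity
  refine ⟨2 * Real.sqrt M + 4 * C + (n : ℝ) * (2 * κ₀ * Real.sqrt (2 * M / η₁))
    + 8 * κ₀ * C * K ^ 2 + 1, by positivity, ?_⟩
  intro ε hε hεK u hu hyp_a hyp_b hyp_c
  set Ω : Set ((Fin (n-1) → ℝ) × ℝ) := Q ×ˢ Set.Ioo (-ℓ) ℓ with hΩdef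
  have hΩm : MeasurableSet Ω := (hQo.prod isOpen_Ioo).measurableSet
  have hΩb : Bornology.IsBounded Ω := hQb.prod (Metric.isBounded_Ioo _ _)
  haveI : IsFiniteMeasure (volume.restrict Ω) :=
    ⟨by rw [Measure.restrict_apply_univ]; exact hΩb.measure_lt_top⟩
  -- continuity facts
  have hpdsv : ∀ (v : (Fin (n-1) → ℝ) × ℝ), ContDiff ℝ 1 (fun x => fderiv ℝ u x v) := by
    intro v
    exact (ContinuousLinearMap.apply ℝ ℝ v).contDiff.comp (hu.fderiv_right (by norm_num))
  have hDz : Continuous (fun x => pdz u x) := by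
    simp only [pdz]; exact (hpdsv _).continuous
  have hDs : ∀ j, Continuous (fun x => pds j u x) := by
    intro j; simp only [pds]; exact (hpdsv _).continuous
  have hD2 : ∀ (v w : (Fin (n-1) → ℝ) × ℝ),
      Continuous (fun x => fderiv ℝ (fun y => fderiv ℝ u y v) x w) := by
    intro v w
    exact (ContinuousLinearMap.apply ℝ ℝ w).continuous.comp ((hpdsv v).continuous_fderiv one_ne_zero)
  have hDss : ∀ j, Continuous (fun x => pds j (fun y => pds j u y) x) := by
    intro j; simp only [pds]; exact hD2 _ _
  have hDzz : Continuous (fun x => pdz (fun y => pdz u y) x) := by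
    simp only [pdz]; exact hD2 _ _
  have hWu : Continuous (fun x => deriv W (u x)) :=
    (hW.continuous_deriv le_rfl).comp hu.continuous
  have hκc : ∀ j, Continuous (κ j) := fun j => (hκ j).continuous
  have hκ'c : ∀ j, Continuous (fun x : (Fin (n-1) → ℝ) × ℝ =>
      fderiv ℝ (κ j) x.1 (Pi.single j 1)) := fun j =>
    ((ContinuousLinearMap.apply ℝ ℝ _).continuous.comp
      ((hκ j).continuous_fderiv one_ne_zero)).comp continuous_fst
  have hbase : ∀ j, Continuous (fun x : (Fin (n-1) → ℝ) × ℝ => 1 + ε * x.2 * κ j x.1) :=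
    fun j => continuous_const.add ((continuous_const.mul continuous_snd).mul
      ((hκc j).comp continuous_fst))
  have hainv : ∀ j, Measurable (fun x : (Fin (n-1) → ℝ) × ℝ => (1 + ε * x.2 * κ j x.1)⁻¹) :=
    fun j => (hbase j).measurable.inv
  -- bounds on Ω
  have hbase_lb : ∀ j, ∀ x ∈ Ω, (1:ℝ)/2 ≤ 1 + ε * x.2 * κ j x.1 := by
    intro j x hx
    have hx1 : x.1 ∈ Q := hx.1
    have hx2 : x.2 ∈ Set.Ioo (-ℓ) ℓ := hx.2
    have h1 : |ε * x.2 * κ j x.1| ≤ ε * ℓ * κ₀ := by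
      rw [abs_mul, abs_mul, abs_of_nonneg hε.le]
      have hz : |x.2| ≤ ℓ := le_of_lt (abs_lt.2 ⟨hx2.1, hx2.2⟩)
      have hk := hκb j x.1 hx1
      gcongr
    have hlk : 0 < ℓ * κ₀ := by positivity
    have h2 : ε * ℓ * κ₀ < 1/2 := by
      have h3 : ε * (ℓ * κ₀) < K * (ℓ * κ₀) := by gcongr
      have h4 : K * (ℓ * κ₀) = 1/2 := by rw [hK]; field_simp
      nlinarith
    nlinarith [neg_abs_le (ε * x.2 * κ j x.1)]
  have ha2 : ∀ j, ∀ x ∈ Ω, |(1 + ε * x.2 * κ j x.1)⁻¹| ≤ 2 := by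
    intro j x hx
    have h := hbase_lb j x hx
    rw [abs_of_nonneg (inv_nonneg.2 (by linarith))]
    calc (1 + ε * x.2 * κ j x.1)⁻¹ ≤ ((1:ℝ)/2)⁻¹ := inv_anti₀ (by norm_num) h
      _ = 2 := by norm_num
  -- Memℒp helpers
  have memC : ∀ {F : (Fin (n-1) → ℝ) × ℝ → ℝ}, Continuous F →
      MemLp F 2 (volume.restrict Ω) := by
    intro F hF
    obtain ⟨B, hB⟩ := hΩb.isCompact_closure.exists_bound_of_continuousOn hF.continuousOn
    exact MemLp.of_bound hF.aestronglyMeasurable B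
      ((ae_restrict_iff' hΩm).2 (ae_of_all _ fun x hx => hB x (subset_closure hx)))
  -- the pieces
  set g : (Fin (n-1) → ℝ) × ℝ → ℝ :=
    fun x => -(ε * lapTil ε κ u x) + ε⁻¹ * deriv W (u x) with hgdef
  set F1 : Fin (n-1) → (Fin (n-1) → ℝ) × ℝ → ℝ :=
    fun j x => ε^2 * (((1 + ε * x.2 * κ j x.1)⁻¹) ^ 2 * pds j (fun y => pds j u y) x) with hF1
  set F2 : Fin (n-1) → (Fin (n-1) → ℝ) × ℝ → ℝ :=
    fun j x => ε * (κ j x.1 * (1 + ε * x.2 * κ j x.1)⁻¹ * pdz u x) with hF2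
  set F3 : Fin (n-1) → (Fin (n-1) → ℝ) × ℝ → ℝ :=
    fun j x => (-(ε^3)) * ((fderiv ℝ (κ j) x.1 (Pi.single j 1))
      * ((1 + ε * x.2 * κ j x.1)⁻¹) ^ 3 * pds j u x) with hF3
  -- pointwise identity
  have key : (fun x => -(pdz (fun y => pdz u y) x) + deriv W (u x))
      = fun x => (ε * g x + ∑ j, F1 j x) + (∑ j, F2 j x) + (∑ j, F3 j x) := by
    funext x
    simp only [hgdef, hF1, hF2, hF3, lapTil]
    rw [← Finset.mul_sum, ← Finset.mul_sum, ← Finset.mul_sum]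
    field_simp
    simp only [mul_comm (pdz u x)]
    ring
  -- measurability of pieces
  have hF1m : ∀ j, Measurable (F1 j) := by
    intro j
    exact (((hainv j).pow_const 2).mul (hDss j).measurable).const_mul _
  have hF2m : ∀ j, Measurable (F2 j) := by
    intro j
    exact ((((hκc j).comp continuous_fst).measurable.mul (hainv j)).mul
      hDz.measurable).const_mul _
  have hF3m : ∀ j, Measurable (F3 j) := by
    intro j
    exact (((hκ'c j).measurable.mul ((hainv j).pow_const 3)).mul
      (hDs j).measurable).const_mul _
  -- scale bounds on Ω
  have hb1 : ∀ j, ∀ x ∈ Ω, |F1 j x| ≤ (4 * ε^2) * |pds j (fun y => pds j u y) x| := by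
    intro j x hx
    have h := ha2 j x hx
    have h1 := abs_nonneg ((1 + ε * x.2 * κ j x.1)⁻¹)
    have hsq : |(1 + ε * x.2 * κ j x.1)⁻¹| ^ 2 ≤ 4 := by nlinarith
    calc |F1 j x| = ε^2 * (|(1 + ε * x.2 * κ j x.1)⁻¹| ^ 2
          * |pds j (fun y => pds j u y) x|) := by
          simp only [hF1]
          rw [abs_mul, abs_of_nonneg (sq_nonneg ε), abs_mul, abs_pow]
      _ ≤ ε^2 * (4 * |pds j (fun y => pds j u y) x|) :=
          mul_le_mul_of_nonneg_left
            (mul_le_mul_of_nonneg_right hsq (abs_nonneg _)) (sq_nonneg ε)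
      _ = (4 * ε^2) * |pds j (fun y => pds j u y) x| := by ring
  have hb2 : ∀ j, ∀ x ∈ Ω, |F2 j x| ≤ (2 * κ₀ * ε) * |pdz u x| := by
    intro j x hx
    have h := ha2 j x hx
    have hk := hκb j x.1 hx.1
    have h1 := abs_nonneg ((1 + ε * x.2 * κ j x.1)⁻¹)
    have h2 := abs_nonneg (κ j x.1)
    calc |F2 j x| = ε * (|κ j x.1| * |(1 + ε * x.2 * κ j x.1)⁻¹| * |pdz u x|) := by
          simp only [hF2]
          rw [abs_mul, abs_of_nonneg hε.le, abs_mul, abs_mul]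
      _ ≤ ε * (κ₀ * 2 * |pdz u x|) :=
          mul_le_mul_of_nonneg_left
            (mul_le_mul_of_nonneg_right (mul_le_mul hk h h1 hκ₀.le) (abs_nonneg _)) hε.le
      _ = (2 * κ₀ * ε) * |pdz u x| := by ring
  have hb3 : ∀ j, ∀ x ∈ Ω, |F3 j x| ≤ (8 * κ₀ * ε^3) * |pds j u x| := by
    intro j x hx
    have h := ha2 j x hx
    have hk := hκ'b j j x.1 hx.1
    have h1 := abs_nonneg ((1 + ε * x.2 * κ j x.1)⁻¹)
    have h2 := abs_nonneg (fderiv ℝ (κ j) x.1 (Pi.single j 1))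
    have hcube : |(1 + ε * x.2 * κ j x.1)⁻¹| ^ 3 ≤ 8 := by
      nlinarith [pow_le_pow_left₀ h1 h 3]
    calc |F3 j x| = ε^3 * (|fderiv ℝ (κ j) x.1 (Pi.single j 1)|
          * |(1 + ε * x.2 * κ j x.1)⁻¹| ^ 3 * |pds j u x|) := by
          simp only [hF3]
          rw [abs_mul, abs_neg, abs_of_nonneg (by positivity : (0:ℝ) ≤ ε^3), abs_mul, abs_mul,
            abs_pow]
      _ ≤ ε^3 * (κ₀ * 8 * |pds j u x|) :=
          mul_le_mul_of_nonneg_left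
            (mul_le_mul_of_nonneg_right (mul_le_mul hk hcube (by positivity) hκ₀.le)
              (abs_nonneg _)) (by positivity)
      _ = (8 * κ₀ * ε^3) * |pds j u x| := by ring
  -- eLpNorm bounds for pieces
  have B1 : ∀ j, eLpNorm (F1 j) 2 (volume.restrict Ω)
      ≤ ENNReal.ofReal (4 * ε^2) * eLpNorm (fun x => pds j (fun y => pds j u y) x) 2
        (volume.restrict Ω) :=
    fun j => eLp_le_scale hΩm (by positivity) (hb1 j)
  have B2 : ∀ j, eLpNorm (F2 j) 2 (volume.restrict Ω)
      ≤ ENNReal.ofReal (2 * κ₀ * ε) * eLpNorm (fun x => pdz u x) 2 (volume.restrict Ω) :=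
    fun j => eLp_le_scale hΩm (by positivity) (hb2 j)
  have B3 : ∀ j, eLpNorm (F3 j) 2 (volume.restrict Ω)
      ≤ ENNReal.ofReal (8 * κ₀ * ε^3) * eLpNorm (fun x => pds j u x) 2 (volume.restrict Ω) :=
    fun j => eLp_le_scale hΩm (by positivity) (hb3 j)
  -- Memℒp facts
  have mem_Dss : ∀ j, MemLp (fun x => pds j (fun y => pds j u y) x) 2 (volume.restrict Ω) :=
    fun j => memC (hDss j)
  have mem_Dz : MemLp (fun x => pdz u x) 2 (volume.restrict Ω) := memC hDz
  have mem_Ds : ∀ j, MemLp (fun x => pds j u x) 2 (volume.restrict Ω) := fun j => memC (hDs j)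
  have mem_F1 : ∀ j, MemLp (F1 j) 2 (volume.restrict Ω) := fun j =>
    ⟨(hF1m j).aestronglyMeasurable,
      lt_of_le_of_lt (B1 j) (ENNReal.mul_lt_top ENNReal.ofReal_lt_top (mem_Dss j).2)⟩
  have mem_F2 : ∀ j, MemLp (F2 j) 2 (volume.restrict Ω) := fun j =>
    ⟨(hF2m j).aestronglyMeasurable,
      lt_of_le_of_lt (B2 j) (ENNReal.mul_lt_top ENNReal.ofReal_lt_top mem_Dz.2)⟩
  have mem_F3 : ∀ j, MemLp (F3 j) 2 (volume.restrict Ω) := fun j =>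
    ⟨(hF3m j).aestronglyMeasurable,
      lt_of_le_of_lt (B3 j) (ENNReal.mul_lt_top ENNReal.ofReal_lt_top (mem_Ds j).2)⟩
  have mem_S1 : MemLp (fun x => ∑ j, F1 j x) 2 (volume.restrict Ω) :=
    memLp_finset_sum _ (fun j _ => mem_F1 j)
  have mem_S2 : MemLp (fun x => ∑ j, F2 j x) 2 (volume.restrict Ω) :=
    memLp_finset_sum _ (fun j _ => mem_F2 j)
  have mem_S3 : MemLp (fun x => ∑ j, F3 j x) 2 (volume.restrict Ω) :=
    memLp_finset_sum _ (fun j _ => mem_F3 j)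
  have hfcont : Continuous (fun x => -(pdz (fun y => pdz u y) x) + deriv W (u x)) :=
    hDzz.neg.add hWu
  have mem_f : MemLp (fun x => -(pdz (fun y => pdz u y) x) + deriv W (u x)) 2
      (volume.restrict Ω) := memC hfcont
  have mem_g : MemLp g 2 (volume.restrict Ω) := by
    have hgeq : g = fun x => ε⁻¹ * (((-(pdz (fun y => pdz u y) x) + deriv W (u x))
        - ∑ j, F1 j x) - ∑ j, F2 j x - ∑ j, F3 j x) := by
      funext x
      have := congrFun key x
      field_simp at this ⊢
      linarith
    rw [hgeq]
    exact (((mem_f.sub mem_S1).sub mem_S2).sub mem_S3).const_mul _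
  have mem_F0 : MemLp (fun x => ε * g x) 2 (volume.restrict Ω) := mem_g.const_mul _
  -- main ENNReal chain
  set μ := volume.restrict Ω with hμ
  have hsum_eq1 : (fun x => ∑ j, F1 j x) = ∑ j, F1 j := by funext x; simp
  have hsum_eq2 : (fun x => ∑ j, F2 j x) = ∑ j, F2 j := by funext x; simp
  have hsum_eq3 : (fun x => ∑ j, F3 j x) = ∑ j, F3 j := by funext x; simp
  have t1 : eLpNorm (fun x => (ε * g x + ∑ j, F1 j x) + (∑ j, F2 j x) + (∑ j, F3 j x)) 2 μ
      ≤ (eLpNorm (fun x => ε * g x) 2 μ + ∑ j, eLpNorm (F1 j) 2 μ)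
        + ∑ j, eLpNorm (F2 j) 2 μ + ∑ j, eLpNorm (F3 j) 2 μ := by
    have s1 : eLpNorm (fun x => ∑ j, F1 j x) 2 μ ≤ ∑ j, eLpNorm (F1 j) 2 μ := by
      rw [hsum_eq1]; exact eLpNorm_sum_le (fun j _ => (hF1m j).aestronglyMeasurable) one_le_two
    have s2 : eLpNorm (fun x => ∑ j, F2 j x) 2 μ ≤ ∑ j, eLpNorm (F2 j) 2 μ := by
      rw [hsum_eq2]; exact eLpNorm_sum_le (fun j _ => (hF2m j).aestronglyMeasurable) one_le_two
    have s3 : eLpNorm (fun x => ∑ j, F3 j x) 2 μ ≤ ∑ j, eLpNorm (F3 j) 2 μ := by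
      rw [hsum_eq3]; exact eLpNorm_sum_le (fun j _ => (hF3m j).aestronglyMeasurable) one_le_two
    calc eLpNorm (fun x => (ε * g x + ∑ j, F1 j x) + (∑ j, F2 j x) + (∑ j, F3 j x)) 2 μ
        ≤ eLpNorm (fun x => (ε * g x + ∑ j, F1 j x) + (∑ j, F2 j x)) 2 μ
          + eLpNorm (fun x => ∑ j, F3 j x) 2 μ :=
          eLpNorm_add_le ((mem_F0.add mem_S1).add mem_S2).1 mem_S3.1 one_le_two
      _ ≤ (eLpNorm (fun x => ε * g x + ∑ j, F1 j x) 2 μ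
          + eLpNorm (fun x => ∑ j, F2 j x) 2 μ) + eLpNorm (fun x => ∑ j, F3 j x) 2 μ :=
          add_le_add_left (eLpNorm_add_le (mem_F0.add mem_S1).1 mem_S2.1 one_le_two) _
      _ ≤ ((eLpNorm (fun x => ε * g x) 2 μ + eLpNorm (fun x => ∑ j, F1 j x) 2 μ)
          + eLpNorm (fun x => ∑ j, F2 j x) 2 μ) + eLpNorm (fun x => ∑ j, F3 j x) 2 μ := by
          gcongr
          exact eLpNorm_add_le mem_F0.1 mem_S1.1 one_le_two
      _ ≤ _ := by gcongr
  have B0 : eLpNorm (fun x => ε * g x) 2 μ ≤ ENNReal.ofReal ε * eLpNorm g 2 μ :=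
    eLp_le_scale hΩm hε.le (fun x _ => by rw [abs_mul, abs_of_nonneg hε.le])
  -- convert hypotheses to eLpNorm language
  have Lg_eq : l2norm Ω g = (eLpNorm g 2 μ).toReal := l2norm_eq mem_g.1
  have Lz_eq : l2norm Ω (fun x => pdz u x) = (eLpNorm (fun x => pdz u x) 2 μ).toReal :=
    l2norm_eq mem_Dz.1
  have Ls_eq : ∀ j, l2norm Ω (fun x => pds j u x)
      = (eLpNorm (fun x => pds j u x) 2 μ).toReal := fun j => l2norm_eq (mem_Ds j).1
  have Lss_eq : ∀ j, l2norm Ω (fun x => pds j (fun y => pds j u y) x)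
      = (eLpNorm (fun x => pds j (fun y => pds j u y) x) 2 μ).toReal :=
    fun j => l2norm_eq (mem_Dss j).1
  -- final bound
  rw [l2norm_eq mem_f.1, key]
  set R : ℝ≥0∞ := (ENNReal.ofReal ε * eLpNorm g 2 μ
      + ∑ j : Fin (n-1), ENNReal.ofReal (4 * ε^2)
        * eLpNorm (fun x => pds j (fun y => pds j u y) x) 2 μ)
      + ∑ j : Fin (n-1), ENNReal.ofReal (2 * κ₀ * ε) * eLpNorm (fun x => pdz u x) 2 μ
      + ∑ j : Fin (n-1), ENNReal.ofReal (8 * κ₀ * ε^3) * eLpNorm (fun x => pds j u x) 2 μ with hR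
  have hRbound : eLpNorm (fun x => (ε * g x + ∑ j, F1 j x) + (∑ j, F2 j x) + (∑ j, F3 j x)) 2 μ
      ≤ R := by
    refine t1.trans ?_
    rw [hR]
    exact add_le_add (add_le_add (add_le_add B0 (Finset.sum_le_sum fun j _ => B1 j))
      (Finset.sum_le_sum fun j _ => B2 j)) (Finset.sum_le_sum fun j _ => B3 j)
  have hRne : R ≠ ∞ := by
    rw [hR]
    refine ENNReal.add_ne_top.2 ⟨ENNReal.add_ne_top.2 ⟨ENNReal.add_ne_top.2 ⟨?_, ?_⟩, ?_⟩, ?_⟩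
    · exact ENNReal.mul_ne_top ENNReal.ofReal_ne_top mem_g.2.ne
    · exact (ENNReal.sum_lt_top.2 fun j _ =>
        ENNReal.mul_lt_top ENNReal.ofReal_lt_top (mem_Dss j).2).ne
    · exact (ENNReal.sum_lt_top.2 fun j _ =>
        ENNReal.mul_lt_top ENNReal.ofReal_lt_top mem_Dz.2).ne
    · exact (ENNReal.sum_lt_top.2 fun j _ =>
        ENNReal.mul_lt_top ENNReal.ofReal_lt_top (mem_Ds j).2).ne
  have hmain : (eLpNorm (fun x => (ε * g x + ∑ j, F1 j x) + (∑ j, F2 j x) + (∑ j, F3 j x)) 2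
      μ).toReal ≤ R.toReal := ENNReal.toReal_mono hRne hRbound
  refine hmain.trans ?_
  -- compute R.toReal
  have hRtoReal : R.toReal = ε * l2norm Ω g
      + ∑ j : Fin (n-1), (4 * ε^2) * l2norm Ω (fun x => pds j (fun y => pds j u y) x)
      + ∑ j : Fin (n-1), (2 * κ₀ * ε) * l2norm Ω (fun x => pdz u x)
      + ∑ j : Fin (n-1), (8 * κ₀ * ε^3) * l2norm Ω (fun x => pds j u x) := by
    rw [hR]
    have fin0 : ENNReal.ofReal ε * eLpNorm g 2 μ ≠ ∞ :=
      ENNReal.mul_ne_top ENNReal.ofReal_ne_top mem_g.2.ne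
    have finS1 : (∑ j : Fin (n-1), ENNReal.ofReal (4 * ε^2)
        * eLpNorm (fun x => pds j (fun y => pds j u y) x) 2 μ) ≠ ∞ :=
      (ENNReal.sum_lt_top.2 fun j _ =>
        ENNReal.mul_lt_top ENNReal.ofReal_lt_top (mem_Dss j).2).ne
    have finS2 : (∑ j : Fin (n-1), ENNReal.ofReal (2 * κ₀ * ε)
        * eLpNorm (fun x => pdz u x) 2 μ) ≠ ∞ :=
      (ENNReal.sum_lt_top.2 fun j _ =>
        ENNReal.mul_lt_top ENNReal.ofReal_lt_top mem_Dz.2).ne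
    have finS3 : (∑ j : Fin (n-1), ENNReal.ofReal (8 * κ₀ * ε^3)
        * eLpNorm (fun x => pds j u x) 2 μ) ≠ ∞ :=
      (ENNReal.sum_lt_top.2 fun j _ =>
        ENNReal.mul_lt_top ENNReal.ofReal_lt_top (mem_Ds j).2).ne
    rw [ENNReal.toReal_add, ENNReal.toReal_add, ENNReal.toReal_add, ENNReal.toReal_sum,
      ENNReal.toReal_sum, ENNReal.toReal_sum]
    · simp only [ENNReal.toReal_mul, ENNReal.toReal_ofReal hε.le,
        ENNReal.toReal_ofReal (by positivity : (0:ℝ) ≤ 4 * ε^2),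
        ENNReal.toReal_ofReal (by positivity : (0:ℝ) ≤ 2 * κ₀ * ε),
        ENNReal.toReal_ofReal (by positivity : (0:ℝ) ≤ 8 * κ₀ * ε^3),
        Lg_eq, Lz_eq, Ls_eq, Lss_eq]
    all_goals first
      | exact fin0
      | exact finS1
      | exact finS2
      | exact finS3
      | exact ENNReal.add_ne_top.2 ⟨fin0, finS1⟩
      | exact ENNReal.add_ne_top.2 ⟨ENNReal.add_ne_top.2 ⟨fin0, finS1⟩, finS2⟩
      | exact fun j _ => ENNReal.mul_ne_top ENNReal.ofReal_ne_top (mem_Dss j).2.ne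
      | exact fun j _ => ENNReal.mul_ne_top ENNReal.ofReal_ne_top mem_Dz.2.ne
      | exact fun j _ => ENNReal.mul_ne_top ENNReal.ofReal_ne_top (mem_Ds j).2.ne
  rw [hRtoReal]
  -- real arithmetic
  have hLg0 : 0 ≤ l2norm Ω g := Real.sqrt_nonneg _
  have hLz0 : 0 ≤ l2norm Ω (fun x => pdz u x) := Real.sqrt_nonneg _
  have hLs0 : ∀ j, 0 ≤ l2norm Ω (fun x => pds j u x) := fun j => Real.sqrt_nonneg _
  have hLss0 : ∀ j, 0 ≤ l2norm Ω (fun x => pds j (fun y => pds j u y) x) :=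
    fun j => Real.sqrt_nonneg _
  have hsum_ss : ∑ j : Fin (n-1), ε * l2norm Ω (fun x => pds j (fun y => pds j u y) x) ≤ C := by
    refine le_trans (Finset.sum_le_sum fun j _ => ?_) hyp_c
    exact le_add_of_nonneg_left (hLs0 j)
  have hsum_s : ∑ j : Fin (n-1), l2norm Ω (fun x => pds j u x) ≤ C := by
    refine le_trans (Finset.sum_le_sum fun j _ => ?_) hyp_c
    refine le_add_of_nonneg_right ?_
    exact mul_nonneg hε.le (hLss0 j)
  have hT1 : ε * l2norm Ω g ≤ (2 * Real.sqrt M) * ε := by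
    rw [mul_comm]
    exact mul_le_mul_of_nonneg_right hyp_a hε.le
  have hT2 : ∑ j : Fin (n-1), (4 * ε^2) * l2norm Ω (fun x => pds j (fun y => pds j u y) x)
      ≤ (4 * C) * ε := by
    have e1 : ∑ j : Fin (n-1), (4 * ε^2) * l2norm Ω (fun x => pds j (fun y => pds j u y) x)
        = (4 * ε) * ∑ j : Fin (n-1), ε * l2norm Ω (fun x => pds j (fun y => pds j u y) x) := by
      rw [Finset.mul_sum]; exact Finset.sum_congr rfl fun j _ => by ring
    rw [e1]
    calc (4 * ε) * ∑ j : Fin (n-1), ε * l2norm Ω (fun x => pds j (fun y => pds j u y) x)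
        ≤ (4 * ε) * C := by
          refine mul_le_mul_of_nonneg_left hsum_ss (by positivity)
      _ = (4 * C) * ε := by ring
  have hcard : ((Finset.univ : Finset (Fin (n-1))).card : ℝ) ≤ (n : ℝ) := by
    rw [Finset.card_univ, Fintype.card_fin]
    exact_mod_cast Nat.sub_le n 1
  have hT3 : ∑ j : Fin (n-1), (2 * κ₀ * ε) * l2norm Ω (fun x => pdz u x)
      ≤ ((n:ℝ) * (2 * κ₀ * Real.sqrt (2 * M / η₁))) * ε := by
    rw [Finset.sum_const, nsmul_eq_mul]
    calc ((Finset.univ : Finset (Fin (n-1))).card : ℝ)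
          * ((2 * κ₀ * ε) * l2norm Ω (fun x => pdz u x))
        ≤ (n : ℝ) * ((2 * κ₀ * ε) * Real.sqrt (2 * M / η₁)) := by
          refine mul_le_mul hcard ?_ (by positivity) (by positivity)
          exact mul_le_mul_of_nonneg_left hyp_b (by positivity)
      _ = ((n:ℝ) * (2 * κ₀ * Real.sqrt (2 * M / η₁))) * ε := by ring
  have hT4 : ∑ j : Fin (n-1), (8 * κ₀ * ε^3) * l2norm Ω (fun x => pds j u x)
      ≤ (8 * κ₀ * C * K^2) * ε := by
    rw [← Finset.mul_sum]
    have h1 : (8 * κ₀ * ε^3) * ∑ j : Fin (n-1), l2norm Ω (fun x => pds j u x) ≤ (8 * κ₀ * ε^3) * C :=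
      mul_le_mul_of_nonneg_left hsum_s (by positivity)
    refine h1.trans ?_
    have hεK2 : ε^2 ≤ K^2 := by nlinarith
    have hεK3 : ε^3 ≤ K^2 * ε := by nlinarith [mul_le_mul_of_nonneg_right hεK2 hε.le]
    nlinarith [mul_nonneg (mul_nonneg hκ₀.le hC.le) (sub_nonneg.2 hεK3)]
  have hdist : (2 * Real.sqrt M + 4 * C + (n : ℝ) * (2 * κ₀ * Real.sqrt (2 * M / η₁))
      + 8 * κ₀ * C * K ^ 2 + 1) * ε
      = (2 * Real.sqrt M) * ε + (4 * C) * ε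
        + ((n:ℝ) * (2 * κ₀ * Real.sqrt (2 * M / η₁))) * ε + (8 * κ₀ * C * K^2) * ε + ε := by
    ring
  rw [hdist]
  linarith [hT1, hT2, hT3, hT4, hε]
end

section
/- Let n ≥ 2, ℓ > 0, let Q ⊂ ℝ^{n−1} be a bounded measurable set, and let W : ℝ → ℝ be C¹ with W(0) = 0. Let u : ℝ^{n−1} × ℝ → ℝ be C², and suppose that for every s ∈ Q one has u(s, −ℓ) = u(s, ℓ) = 0 and (∂u/∂z)(s, −ℓ) = (∂u/∂z)(s, ℓ) = 0. Then ∫_{Q×(−ℓ,ℓ)} | (1/2)·(∂u/∂z)² − W(u) | ds dz ≤ 2ℓ · ‖−∂²u/∂z² + W'(u)‖_{L²(Q×(−ℓ,ℓ))} · ‖∂u/∂z‖_{L²(Q×(−ℓ,ℓ))}. -/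
open MeasureTheory

lemma hasDerivAt_slice {m : ℕ} {v : (Fin m → ℝ) × ℝ → ℝ} (hv : Differentiable ℝ v)
    (s : Fin m → ℝ) (z : ℝ) : HasDerivAt (fun t => v (s, t)) (pdz v (s, z)) z := by
  have h1 : HasDerivAt (fun t : ℝ => ((s, t) : (Fin m → ℝ) × ℝ)) ((0 : Fin m → ℝ), (1 : ℝ)) z :=
    (hasDerivAt_const z s).prodMk (hasDerivAt_id z)
  exact (hv (s, z)).hasFDerivAt.comp_hasDerivAt z h1

lemma contDiff_pdz {m : ℕ} {v : (Fin m → ℝ) × ℝ → ℝ} {k : ℕ} (hv : ContDiff ℝ (k + 1) v) :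
    ContDiff ℝ k (pdz v) := by
  have h := (ContinuousLinearMap.apply ℝ ℝ (((0 : Fin m → ℝ), (1 : ℝ)))).contDiff.comp
    (hv.fderiv_right (m := (k:ℕ∞)) (by exact_mod_cast le_refl (k+1)))
  exact h

set_option maxHeartbeats 4000000 in
/-- `L¹` equipartition defect estimate over the slab `Q × (−ℓ, ℓ)`. -/
theorem stmt_6 (n : ℕ) (hn : 2 ≤ n) (ℓ : ℝ) (hℓ : 0 < ℓ)
    (Q : Set (Fin (n - 1) → ℝ)) (hQm : MeasurableSet Q) (hQb : Bornology.IsBounded Q)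
    (W : ℝ → ℝ) (hW : ContDiff ℝ 1 W) (hW0 : W 0 = 0)
    (u : (Fin (n - 1) → ℝ) × ℝ → ℝ) (hu : ContDiff ℝ 2 u)
    (hbc : ∀ s ∈ Q, u (s, -ℓ) = 0 ∧ u (s, ℓ) = 0 ∧ pdz u (s, -ℓ) = 0 ∧ pdz u (s, ℓ) = 0) :
    (∫ x in Q ×ˢ Set.Ioo (-ℓ) ℓ, |(1 / 2) * (pdz u x) ^ 2 - W (u x)|) ≤
      2 * ℓ * l2norm (Q ×ˢ Set.Ioo (-ℓ) ℓ) (fun x => -(pdz (fun y => pdz u y) x) + deriv W (u x))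
        * l2norm (Q ×ˢ Set.Ioo (-ℓ) ℓ) (fun x => pdz u x) := by
  set Ω : Set ((Fin (n-1) → ℝ) × ℝ) := Q ×ˢ Set.Ioo (-ℓ) ℓ with hΩ
  -- basic regularity facts
  have hud : Differentiable ℝ u := hu.differentiable (by norm_num)
  have hpdz1 : ContDiff ℝ 1 (pdz u) := contDiff_pdz (k := 1) hu
  have hpdzd : Differentiable ℝ (pdz u) := hpdz1.differentiable (by norm_num)
  have hWd : Differentiable ℝ W := hW.differentiable (by norm_num)
  have hW'c : Continuous (deriv W) := hW.continuous_deriv (le_refl _)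
  have hfc : Continuous (pdz u) := hpdz1.continuous
  have hf2c : Continuous (pdz (pdz u)) := (contDiff_pdz (k := 0) hpdz1).continuous
  have huc : Continuous u := hu.continuous
  -- the functions
  set f : (Fin (n-1) → ℝ) × ℝ → ℝ := pdz u with hf
  set g : (Fin (n-1) → ℝ) × ℝ → ℝ := fun x => -(pdz (pdz u) x) + deriv W (u x) with hg
  set φ : (Fin (n-1) → ℝ) × ℝ → ℝ := fun x => (1 / 2) * (pdz u x) ^ 2 - W (u x) with hφ
  set D : (Fin (n-1) → ℝ) × ℝ → ℝ := fun x => pdz u x * pdz (pdz u) x - deriv W (u x) * pdz u x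
    with hD
  have hgc : Continuous g := (hf2c.neg).add (hW'c.comp huc)
  have hDc : Continuous D := (hfc.mul hf2c).sub ((hW'c.comp huc).mul hfc)
  have hφc : Continuous φ := (continuous_const.mul (hfc.pow 2)).sub (hW.continuous.comp huc)
  have hDfg : ∀ x, |D x| = |g x| * |f x| := by
    intro x
    have : D x = -(f x * g x) := by simp [hD, hf, hg]; ring
    rw [this, abs_neg, abs_mul, mul_comm]
  -- Ω is bounded, measurable
  have hΩb : Bornology.IsBounded Ω := hQb.prod (Metric.isBounded_Ioo _ _)
  have hΩm : MeasurableSet Ω := hQm.prod measurableSet_Ioo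
  have hK : IsCompact (closure Ω) := hΩb.isCompact_closure
  have hint : ∀ F : (Fin (n-1) → ℝ) × ℝ → ℝ, Continuous F → IntegrableOn F Ω := fun F hF =>
    (hF.continuousOn.integrableOn_compact hK).mono_set subset_closure
  -- fiberwise derivative
  have hslice : ∀ (s : Fin (n-1) → ℝ) (t : ℝ),
      HasDerivAt (fun z => φ (s, z)) (D (s, t)) t := by
    intro s t
    have h1 : HasDerivAt (fun z => u (s, z)) (pdz u (s, t)) t := hasDerivAt_slice hud s t
    have h2 : HasDerivAt (fun z => pdz u (s, z)) (pdz (pdz u) (s, t)) t :=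
      hasDerivAt_slice hpdzd s t
    have h3 : HasDerivAt (fun z => W (u (s, z))) (deriv W (u (s, t)) * pdz u (s, t)) t :=
      (hWd (u (s, t))).hasDerivAt.comp t h1
    have h4 : HasDerivAt (fun z => (1 / 2 : ℝ) * (pdz u (s, z)) ^ 2)
        ((1 / 2 : ℝ) * ((2 : ℕ) * (pdz u (s, t)) ^ 1 * pdz (pdz u) (s, t))) t :=
      (h2.pow 2).const_mul _
    have := h4.sub h3
    convert this using 1
    · rfl
    · rfl
    · rfl
    simp [hD]; ring
  -- fiberwise estimate
  have hfiber : ∀ s ∈ Q, ∀ z ∈ Set.Ioo (-ℓ) ℓ,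
      |φ (s, z)| ≤ ∫ t in Set.Ioo (-ℓ) ℓ, |D (s, t)| := by
    intro s hs z hz
    have hDint : ∀ a b : ℝ, IntervalIntegrable (fun t => D (s, t)) volume a b :=
      fun a b => (hDc.comp (Continuous.prodMk_right s)).intervalIntegrable a b
    have hftc : ∫ t in (-ℓ)..z, D (s, t) = φ (s, z) - φ (s, -ℓ) :=
      intervalIntegral.integral_eq_sub_of_hasDerivAt (fun t _ => hslice s t) (hDint _ _)
    have hφ0 : φ (s, -ℓ) = 0 := by
      obtain ⟨h1, _, h3, _⟩ := hbc s hs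
      have h3' : pdz u (s, -ℓ) = 0 := h3
      simp [hφ, h1, h3', hW0]
    have hle : -ℓ ≤ z := le_of_lt hz.1
    calc |φ (s, z)| = |∫ t in (-ℓ)..z, D (s, t)| := by rw [hftc, hφ0, sub_zero]
      _ ≤ ∫ t in (-ℓ)..z, |D (s, t)| := intervalIntegral.abs_integral_le_integral_abs hle
      _ ≤ ∫ t in (-ℓ)..ℓ, |D (s, t)| := by
          apply intervalIntegral.integral_mono_interval (le_refl (-ℓ)) hle (le_of_lt hz.2)
          · exact Filter.Eventually.of_forall fun t => abs_nonneg _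
          · exact ((hDc.comp (Continuous.prodMk_right s)).abs).intervalIntegrable _ _
      _ = ∫ t in Set.Ioo (-ℓ) ℓ, |D (s, t)| := by
          rw [intervalIntegral.integral_of_le (by linarith), integral_Ioc_eq_integral_Ioo]
  -- inner integral estimate
  have hinner : ∀ s ∈ Q, (∫ z in Set.Ioo (-ℓ) ℓ, |φ (s, z)|) ≤
      2 * ℓ * ∫ t in Set.Ioo (-ℓ) ℓ, |D (s, t)| := by
    intro s hs
    have h1 : IntegrableOn (fun z => |φ (s, z)|) (Set.Ioo (-ℓ) ℓ) :=
      (((hφc.comp (Continuous.prodMk_right s)).abs).continuousOn.integrableOn_compact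
        isCompact_Icc).mono_set Set.Ioo_subset_Icc_self
    have h2 : IntegrableOn (fun _ : ℝ => ∫ t in Set.Ioo (-ℓ) ℓ, |D (s, t)|) (Set.Ioo (-ℓ) ℓ) :=
      integrableOn_const (by rw [Real.volume_Ioo]; exact ENNReal.ofReal_ne_top) 
    calc (∫ z in Set.Ioo (-ℓ) ℓ, |φ (s, z)|)
        ≤ ∫ _z in Set.Ioo (-ℓ) ℓ, ∫ t in Set.Ioo (-ℓ) ℓ, |D (s, t)| :=
          setIntegral_mono_on h1 h2 measurableSet_Ioo (hfiber s hs)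
      _ = 2 * ℓ * ∫ t in Set.Ioo (-ℓ) ℓ, |D (s, t)| := by
          rw [setIntegral_const, Real.volume_real_Ioo_of_le (by linarith), smul_eq_mul]
          ring
  -- Fubini setup
  have hprod : (volume : Measure ((Fin (n-1) → ℝ) × ℝ)) = (volume : Measure (Fin (n-1) → ℝ)).prod volume :=
    Measure.volume_eq_prod _ _
  have hFub : ∀ F : (Fin (n-1) → ℝ) × ℝ → ℝ, Continuous F →
      (∫ x in Ω, F x) = ∫ s in Q, ∫ z in Set.Ioo (-ℓ) ℓ, F (s, z) := by
    intro F hF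
    have h := hint F hF
    rw [hΩ, hprod] at h ⊢
    exact setIntegral_prod F h
  have hIntInner : ∀ F : (Fin (n-1) → ℝ) × ℝ → ℝ, Continuous F →
      IntegrableOn (fun s => ∫ z in Set.Ioo (-ℓ) ℓ, F (s, z)) Q := by
    intro F hF
    have h := hint F hF
    rw [hΩ, hprod, IntegrableOn, ← Measure.prod_restrict] at h
    exact h.integral_prod_left
  -- step 1: LHS ≤ 2ℓ ∫_Ω |D|
  have step1 : (∫ x in Ω, |φ x|) ≤ 2 * ℓ * ∫ x in Ω, |D x| := by
    rw [hFub _ hφc.abs, hFub _ hDc.abs]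
    have h1 : IntegrableOn (fun s => ∫ z in Set.Ioo (-ℓ) ℓ, |φ (s, z)|) Q :=
      hIntInner _ hφc.abs
    have h2 : IntegrableOn (fun s => 2 * ℓ * ∫ z in Set.Ioo (-ℓ) ℓ, |D (s, z)|) Q :=
      (hIntInner _ hDc.abs).const_mul _
    calc (∫ s in Q, ∫ z in Set.Ioo (-ℓ) ℓ, |φ (s, z)|)
        ≤ ∫ s in Q, 2 * ℓ * ∫ z in Set.Ioo (-ℓ) ℓ, |D (s, z)| :=
          setIntegral_mono_on h1 h2 hQm hinner
      _ = 2 * ℓ * ∫ s in Q, ∫ z in Set.Ioo (-ℓ) ℓ, |D (s, z)| := integral_const_mul _ _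
  -- step 2: Cauchy–Schwarz
  have hΩfin : volume Ω < ⊤ := lt_of_le_of_lt (measure_mono subset_closure) hK.measure_lt_top
  haveI : Fact (volume Ω < ⊤) := ⟨hΩfin⟩
  have hmemp : ∀ F : (Fin (n-1) → ℝ) × ℝ → ℝ, Continuous F →
      MemLp (fun x => |F x|) (ENNReal.ofReal 2) (volume.restrict Ω) := by
    intro F hF
    obtain ⟨C, hC⟩ := hK.exists_bound_of_continuousOn hF.continuousOn.abs
    refine MemLp.of_bound hF.abs.aestronglyMeasurable C ?_
    exact (ae_restrict_mem hΩm).mono fun x hx => hC x (subset_closure hx)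
  have step2 : (∫ x in Ω, |D x|) ≤ l2norm Ω g * l2norm Ω f := by
    have hCS := integral_mul_le_Lp_mul_Lq_of_nonneg (μ := volume.restrict Ω)
      (p := 2) (q := 2) ⟨by norm_num, by norm_num, by norm_num⟩
      (Filter.Eventually.of_forall fun x => abs_nonneg (g x))
      (Filter.Eventually.of_forall fun x => abs_nonneg (f x))
      (hmemp g hgc) (hmemp f hfc)
    have e1 : (∫ x in Ω, |D x|) = ∫ x in Ω, |g x| * |f x| := by
      exact integral_congr_ae (Filter.Eventually.of_forall fun x => hDfg x)
    have e2 : ∀ F : (Fin (n-1) → ℝ) × ℝ → ℝ, (∫ x in Ω, |F x| ^ (2 : ℝ)) = ∫ x in Ω, F x ^ 2 := by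
      intro F
      exact integral_congr_ae (Filter.Eventually.of_forall fun x => by
        show |F x| ^ (2 : ℝ) = F x ^ 2
        rw [Real.rpow_two, sq_abs])
    rw [e1]
    calc (∫ x in Ω, |g x| * |f x|)
        ≤ (∫ x in Ω, |g x| ^ (2:ℝ)) ^ (1/2 : ℝ) * (∫ x in Ω, |f x| ^ (2:ℝ)) ^ (1/2 : ℝ) := hCS
      _ = l2norm Ω g * l2norm Ω f := by
          rw [e2 g, e2 f, l2norm, l2norm, Real.sqrt_eq_rpow, Real.sqrt_eq_rpow]
  calc (∫ x in Ω, |φ x|) ≤ 2 * ℓ * ∫ x in Ω, |D x| := step1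
    _ ≤ 2 * ℓ * (l2norm Ω g * l2norm Ω f) := by
        apply mul_le_mul_of_nonneg_left step2 (by linarith)
    _ = 2 * ℓ * l2norm Ω g * l2norm Ω f := by ring
end

section
/- Let D ⊆ ℝⁿ be a measurable set of finite Lebesgue measure, let p ≥ 2 and q ≥ p − 1 be real numbers, and let g : ℝ → ℝ be continuous with |g(v)| ≤ a·|v|^{p−1} + b for all v ∈ ℝ, where a, b ≥ 0. Suppose f_k, f : D → ℝ are measurable, f_k → f almost everywhere on D, f and each f_k belong to L^q(D), and ∫_D |f_k − f|^q → 0 as k → ∞. Then ∫_D |g(f_k) − g(f)|^{q/(p−1)} → 0 as k → ∞; that is, g(f_k) → g(f) strongly in L^{q/(p−1)}(D). -/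
open MeasureTheory Filter
open scoped ENNReal

private lemma two_rpow_bound {x y t : ℝ} (hx : 0 ≤ x) (hy : 0 ≤ y) (ht : 0 ≤ t) :
    (x + y) ^ t ≤ 2 ^ t * (x ^ t + y ^ t) := by
  have hmax : (0:ℝ) ≤ max x y := le_max_of_le_left hx
  have h1 : x + y ≤ 2 * max x y := by
    rcases le_total x y with h | h
    · rw [max_eq_right h]; linarith
    · rw [max_eq_left h]; linarith
  have h2 : (x + y) ^ t ≤ (2 * max x y) ^ t :=
    Real.rpow_le_rpow (by linarith) h1 ht
  have h3 : (2 * max x y) ^ t = 2 ^ t * (max x y) ^ t :=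
    Real.mul_rpow (by norm_num) hmax
  have h4 : (max x y) ^ t ≤ x ^ t + y ^ t := by
    rcases max_cases x y with ⟨h, _⟩ | ⟨h, _⟩ <;> rw [h]
    · nlinarith [Real.rpow_nonneg hy t]
    · nlinarith [Real.rpow_nonneg hx t]
  have h5 : (0:ℝ) ≤ 2 ^ t := Real.rpow_nonneg (by norm_num) t
  calc (x + y) ^ t ≤ 2 ^ t * (max x y) ^ t := by rw [← h3]; exact h2
    _ ≤ 2 ^ t * (x ^ t + y ^ t) := mul_le_mul_of_nonneg_left h4 h5

/-- Generalized dominated convergence theorem for `lintegral`. -/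
private lemma gdct {α : Type*} {m : MeasurableSpace α} {μ : Measure α}
    {F G : ℕ → α → ℝ≥0∞} {Gl : α → ℝ≥0∞}
    (hFm : ∀ k, Measurable (F k)) (hGm : ∀ k, Measurable (G k))
    (hle : ∀ k x, F k x ≤ G k x)
    (hF0 : ∀ᵐ x ∂μ, Tendsto (fun k => F k x) atTop (nhds 0))
    (hGtend : ∀ᵐ x ∂μ, Tendsto (fun k => G k x) atTop (nhds (Gl x)))
    (hGint : Tendsto (fun k => ∫⁻ x, G k x ∂μ) atTop (nhds (∫⁻ x, Gl x ∂μ)))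
    (hfin : (∫⁻ x, Gl x ∂μ) ≠ ⊤) :
    Tendsto (fun k => ∫⁻ x, F k x ∂μ) atTop (nhds 0) := by
  set L := ∫⁻ x, Gl x ∂μ with hL
  set A := fun k => ∫⁻ x, (G k x - F k x) ∂μ with hA
  have hsm : ∀ k, Measurable fun x => G k x - F k x := fun k => (hGm k).sub (hFm k)
  have hAle : ∀ k, A k ≤ ∫⁻ x, G k x ∂μ := fun k =>
    lintegral_mono fun x => tsub_le_self
  have hAtend : Tendsto A atTop (nhds L) := by
    refine tendsto_of_le_liminf_of_limsup_le ?_ ?_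
    · have hcong : L = ∫⁻ x, liminf (fun k => G k x - F k x) atTop ∂μ := by
        refine lintegral_congr_ae ?_
        filter_upwards [hF0, hGtend] with x h1 h2
        have h3 : Tendsto (fun k => G k x - F k x) atTop (nhds (Gl x - 0)) :=
          ENNReal.Tendsto.sub h2 h1 (Or.inr (by simp))
        rw [tsub_zero] at h3
        exact h3.liminf_eq.symm
      rw [hcong]
      exact lintegral_liminf_le' fun k => (hsm k).aemeasurable
    · calc limsup A atTop ≤ limsup (fun k => ∫⁻ x, G k x ∂μ) atTop :=
            limsup_le_limsup (Eventually.of_forall hAle)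
        _ = L := hGint.limsup_eq
  have hev : ∀ᶠ k in atTop, (∫⁻ x, G k x ∂μ) < ⊤ :=
    hGint.eventually_lt_const (lt_top_iff_ne_top.mpr hfin)
  have hsub := ENNReal.Tendsto.sub hGint hAtend (Or.inl hfin)
  rw [tsub_self] at hsub
  refine hsub.congr' ?_
  filter_upwards [hev] with k hk
  have hadd : (∫⁻ x, F k x ∂μ) + A k = ∫⁻ x, G k x ∂μ := by
    rw [hA, add_comm, ← lintegral_add_right _ (hFm k)]
    exact lintegral_congr fun x => tsub_add_cancel_of_le (hle k x)
  have hAne : A k ≠ ⊤ := ((hAle k).trans_lt hk).ne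
  exact (ENNReal.eq_sub_of_add_eq hAne hadd).symm

/-- generalized dominated convergence for the Nemytskii operator `g`:
`L^q` convergence plus a.e. convergence implies `g(f_k) → g(f)` in `L^{q/(p−1)}`. -/
theorem stmt_7 (n : ℕ) (D : Set (Fin n → ℝ)) (hD : MeasurableSet D) (hDfin : volume D < ⊤)
    (p q : ℝ) (hp : 2 ≤ p) (hq : p - 1 ≤ q)
    (g : ℝ → ℝ) (hg : Continuous g) (a b : ℝ) (ha : 0 ≤ a) (hb : 0 ≤ b)
    (hgb : ∀ v : ℝ, |g v| ≤ a * |v| ^ (p - 1) + b)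
    (f : (Fin n → ℝ) → ℝ) (fk : ℕ → (Fin n → ℝ) → ℝ)
    (hfm : Measurable f) (hfkm : ∀ k, Measurable (fk k))
    (hae : ∀ᵐ x ∂(volume.restrict D), Tendsto (fun k => fk k x) atTop (nhds (f x)))
    (hfLq : IntegrableOn (fun x => |f x| ^ q) D)
    (hfkLq : ∀ k, IntegrableOn (fun x => |fk k x| ^ q) D)
    (hconv : Tendsto (fun k => ∫ x in D, |fk k x - f x| ^ q) atTop (nhds 0)) :
    Tendsto (fun k => ∫ x in D, |g (fk k x) - g (f x)| ^ (q / (p - 1))) atTop (nhds 0) := by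
  have hpq0 : (0:ℝ) < p - 1 := by linarith
  have hq1 : (1:ℝ) ≤ q := le_trans (by linarith) hq
  have hq0 : (0:ℝ) < q := by linarith
  have hq0' : (0:ℝ) ≤ q := hq0.le
  set r := q / (p - 1) with hr
  have hr0 : (0:ℝ) < r := div_pos hq0 hpq0
  have hpr : (p - 1) * r = q := by rw [hr]; field_simp
  set μ := volume.restrict D with hμ
  -- constants
  set B := (2:ℝ) ^ r with hB
  have hB0 : 0 ≤ B := Real.rpow_nonneg (by norm_num) r
  set c := B * B * a ^ r with hc
  set d := (2:ℝ) * (B * B) * b ^ r with hd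
  have hc0 : 0 ≤ c := mul_nonneg (mul_nonneg hB0 hB0) (Real.rpow_nonneg ha r)
  have hd0 : 0 ≤ d := by
    have := Real.rpow_nonneg hb r
    nlinarith
  -- pointwise bound
  have hgr : ∀ w : ℝ, |g w| ^ r ≤ B * (a ^ r * |w| ^ q + b ^ r) := by
    intro w
    have h1 : |g w| ^ r ≤ (a * |w| ^ (p-1) + b) ^ r :=
      Real.rpow_le_rpow (abs_nonneg _) (hgb w) hr0.le
    have h2 : (a * |w| ^ (p-1) + b) ^ r ≤ B * ((a * |w| ^ (p-1)) ^ r + b ^ r) :=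
      two_rpow_bound (mul_nonneg ha (Real.rpow_nonneg (abs_nonneg _) _)) hb hr0.le
    have h3 : (a * |w| ^ (p-1)) ^ r = a ^ r * |w| ^ q := by
      rw [Real.mul_rpow ha (Real.rpow_nonneg (abs_nonneg _) _),
        ← Real.rpow_mul (abs_nonneg w), hpr]
    calc |g w| ^ r ≤ B * ((a * |w| ^ (p-1)) ^ r + b ^ r) := h1.trans h2
      _ = B * (a ^ r * |w| ^ q + b ^ r) := by rw [h3]
  have hbound : ∀ u v : ℝ, |g u - g v| ^ r ≤ c * (|u| ^ q + |v| ^ q) + d := by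
    intro u v
    have h1 : |g u - g v| ≤ |g u| + |g v| := by
      have := abs_add_le (g u) (-(g v)); simpa [sub_eq_add_neg] using this
    have h2 : |g u - g v| ^ r ≤ (|g u| + |g v|) ^ r :=
      Real.rpow_le_rpow (abs_nonneg _) h1 hr0.le
    have h3 : (|g u| + |g v|) ^ r ≤ B * (|g u| ^ r + |g v| ^ r) :=
      two_rpow_bound (abs_nonneg _) (abs_nonneg _) hr0.le
    calc |g u - g v| ^ r ≤ B * (|g u| ^ r + |g v| ^ r) := h2.trans h3
      _ ≤ B * (B * (a ^ r * |u| ^ q + b ^ r) + B * (a ^ r * |v| ^ q + b ^ r)) :=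
          mul_le_mul_of_nonneg_left (add_le_add (hgr u) (hgr v)) hB0
      _ = c * (|u| ^ q + |v| ^ q) + d := by rw [hc, hd]; ring
  -- measurability helper
  have habs : ∀ (h : (Fin n → ℝ) → ℝ), Measurable h → Measurable (fun x => |h x| ^ q) :=
    fun h hm => ((Real.continuous_rpow_const hq0').comp continuous_abs).measurable.comp hm
  -- real integrals
  set rk := fun k => ∫ x in D, |fk k x| ^ q with hrk
  set rl := ∫ x in D, |f x| ^ q with hrl
  have hrk_nn : ∀ k, 0 ≤ rk k := fun k => integral_nonneg fun x => by positivity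
  have hrl_nn : 0 ≤ rl := integral_nonneg fun x => by positivity
  -- integrability of differences
  have hdk_meas : ∀ k, Measurable fun x => |fk k x - f x| ^ q :=
    fun k => habs _ ((hfkm k).sub hfm)
  have hdk_int : ∀ k, Integrable (fun x => |fk k x - f x| ^ q) μ := by
    intro k
    have hbig : Integrable (fun x => (2:ℝ) ^ q * (|fk k x| ^ q + |f x| ^ q)) μ :=
      (((hfkLq k).add hfLq).const_mul _)
    refine hbig.mono' ((hdk_meas k).aestronglyMeasurable) (ae_of_all _ fun x => ?_)
    rw [Real.norm_eq_abs, abs_of_nonneg (by positivity)]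
    have h1 : |fk k x - f x| ≤ |fk k x| + |f x| := by
      have := abs_add_le (fk k x) (-(f x)); simpa [sub_eq_add_neg] using this
    calc |fk k x - f x| ^ q ≤ (|fk k x| + |f x|) ^ q :=
          Real.rpow_le_rpow (abs_nonneg _) h1 hq0'
      _ ≤ 2 ^ q * (|fk k x| ^ q + |f x| ^ q) :=
          two_rpow_bound (abs_nonneg _) (abs_nonneg _) hq0'
  -- lintegral / integral identities
  have hIk : ∀ k, (∫⁻ x, ENNReal.ofReal (|fk k x| ^ q) ∂μ) = ENNReal.ofReal (rk k) := fun k =>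
    (ofReal_integral_eq_lintegral_ofReal (hfkLq k) (ae_of_all _ fun x => by positivity)).symm
  have hIl : (∫⁻ x, ENNReal.ofReal (|f x| ^ q) ∂μ) = ENNReal.ofReal rl :=
    (ofReal_integral_eq_lintegral_ofReal hfLq (ae_of_all _ fun x => by positivity)).symm
  have hN : ∀ k, (∫⁻ x, ENNReal.ofReal (|fk k x - f x| ^ q) ∂μ)
      = ENNReal.ofReal (∫ x in D, |fk k x - f x| ^ q) := fun k =>
    (ofReal_integral_eq_lintegral_ofReal (hdk_int k) (ae_of_all _ fun x => by positivity)).symm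
  -- Minkowski-type comparison
  have hco : ∀ (h : (Fin n → ℝ) → ℝ) (x : Fin n → ℝ),
      ENNReal.ofReal (|h x| ^ q) = (ENNReal.ofReal |h x|) ^ q := fun h x =>
    (ENNReal.ofReal_rpow_of_nonneg (abs_nonneg _) hq0').symm
  have hmink : ∀ (u v w : (Fin n → ℝ) → ℝ), Measurable v → Measurable w →
      (∀ x, |u x| ≤ |v x| + |w x|) →
      (∫⁻ x, ENNReal.ofReal (|u x| ^ q) ∂μ) ^ (1/q) ≤
      (∫⁻ x, ENNReal.ofReal (|v x| ^ q) ∂μ) ^ (1/q) +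
      (∫⁻ x, ENNReal.ofReal (|w x| ^ q) ∂μ) ^ (1/q) := by
    intro u v w hv hw hptw
    simp only [hco]
    have h1 : ∀ x, (ENNReal.ofReal |u x|) ^ q ≤
        ((fun x => ENNReal.ofReal |v x|) + fun x => ENNReal.ofReal |w x|) x ^ q := by
      intro x
      apply ENNReal.rpow_le_rpow _ hq0'
      calc ENNReal.ofReal |u x| ≤ ENNReal.ofReal (|v x| + |w x|) :=
            ENNReal.ofReal_le_ofReal (hptw x)
        _ ≤ _ := ENNReal.ofReal_add_le
    have hmv : AEMeasurable (fun x => ENNReal.ofReal |v x|) μ :=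
      ((continuous_abs.measurable.comp hv).ennreal_ofReal).aemeasurable
    have hmw : AEMeasurable (fun x => ENNReal.ofReal |w x|) μ :=
      ((continuous_abs.measurable.comp hw).ennreal_ofReal).aemeasurable
    calc (∫⁻ x, (ENNReal.ofReal |u x|) ^ q ∂μ) ^ (1/q)
        ≤ (∫⁻ x, ((fun x => ENNReal.ofReal |v x|) + fun x => ENNReal.ofReal |w x|) x ^ q ∂μ) ^ (1/q) :=
          ENNReal.rpow_le_rpow (lintegral_mono fun x => h1 x) (by positivity)
      _ ≤ _ := ENNReal.lintegral_Lp_add_le hmv hmw hq1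
  -- the two triangle inequalities, in ℝ
  have htri : ∀ k, |(rk k) ^ (1/q) - rl ^ (1/q)| ≤ (∫ x in D, |fk k x - f x| ^ q) ^ (1/q) := by
    intro k
    have hNnn : 0 ≤ ∫ x in D, |fk k x - f x| ^ q := integral_nonneg fun x => by positivity
    have e1 : ∀ s : ℝ, 0 ≤ s → (ENNReal.ofReal s) ^ (1/q : ℝ) = ENNReal.ofReal (s ^ (1/q)) :=
      fun s hs => ENNReal.ofReal_rpow_of_nonneg hs (by positivity)
    have k1 : (rk k) ^ (1/q) ≤ rl ^ (1/q) + (∫ x in D, |fk k x - f x| ^ q) ^ (1/q) := by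
      have h := hmink (fk k) f (fun x => fk k x - f x) hfm ((hfkm k).sub hfm)
        (fun x => by
          have := abs_add_le (f x) (fk k x - f x); simpa [add_comm] using this)
      rw [hIk, hIl, hN, e1 _ (hrk_nn k), e1 _ hrl_nn, e1 _ hNnn,
        ← ENNReal.ofReal_add (by positivity) (by positivity)] at h
      exact (ENNReal.ofReal_le_ofReal_iff (by positivity)).mp h
    have k2 : rl ^ (1/q) ≤ (rk k) ^ (1/q) + (∫ x in D, |fk k x - f x| ^ q) ^ (1/q) := by
      have h := hmink f (fk k) (fun x => fk k x - f x) (hfkm k) ((hfkm k).sub hfm)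
        (fun x => by
          have h0 : f x = fk k x + -(fk k x - f x) := by ring
          calc |f x| = |fk k x + -(fk k x - f x)| := by rw [← h0]
            _ ≤ |fk k x| + |-(fk k x - f x)| := abs_add_le _ _
            _ = |fk k x| + |fk k x - f x| := by rw [abs_neg])
      rw [hIk, hIl, hN, e1 _ (hrk_nn k), e1 _ hrl_nn, e1 _ hNnn,
        ← ENNReal.ofReal_add (by positivity) (by positivity)] at h
      exact (ENNReal.ofReal_le_ofReal_iff (by positivity)).mp h
    rw [abs_sub_le_iff]
    constructor <;> linarith
  -- nk → 0
  have hnk0 : Tendsto (fun k => (∫ x in D, |fk k x - f x| ^ q) ^ (1/q)) atTop (nhds 0) := by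
    have hc' : ContinuousAt (fun s : ℝ => s ^ (1/q : ℝ)) 0 :=
      Real.continuousAt_rpow_const 0 (1/q) (Or.inr (by positivity))
    have h := hc'.tendsto.comp hconv
    have h0 : (0:ℝ) ^ (1/q : ℝ) = 0 := Real.zero_rpow (one_div_ne_zero hq0.ne')
    rw [h0] at h
    exact h
  -- rk → rl
  have hsk : Tendsto (fun k => (rk k) ^ (1/q : ℝ)) atTop (nhds (rl ^ (1/q : ℝ))) := by
    rw [tendsto_iff_dist_tendsto_zero]
    refine squeeze_zero (fun k => dist_nonneg) (fun k => ?_) hnk0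
    rw [Real.dist_eq]; exact htri k
  have hrkt : Tendsto rk atTop (nhds rl) := by
    have hcq : Continuous (fun s : ℝ => s ^ q) := Real.continuous_rpow_const hq0'
    have h := (hcq.tendsto _).comp hsk
    have hid : ∀ x : ℝ, 0 ≤ x → (x ^ (1/q : ℝ)) ^ q = x := fun x hx => by
      rw [← Real.rpow_mul hx, one_div_mul_cancel hq0.ne', Real.rpow_one]
    rw [hid rl hrl_nn] at h
    exact h.congr fun k => hid (rk k) (hrk_nn k)
  -- set up generalized dominated convergence
  set F' : ℕ → (Fin n → ℝ) → ℝ≥0∞ :=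
    fun k x => ENNReal.ofReal (|g (fk k x) - g (f x)| ^ r) with hF'
  set G' : ℕ → (Fin n → ℝ) → ℝ≥0∞ :=
    fun k x => ENNReal.ofReal (c * |fk k x| ^ q) + ENNReal.ofReal (c * |f x| ^ q)
      + ENNReal.ofReal d with hG'
  set Gl' : (Fin n → ℝ) → ℝ≥0∞ :=
    fun x => ENNReal.ofReal (c * |f x| ^ q) + ENNReal.ofReal (c * |f x| ^ q)
      + ENNReal.ofReal d with hGl'
  have hFm : ∀ k, Measurable (F' k) := by
    intro k
    apply Measurable.ennreal_ofReal
    exact ((Real.continuous_rpow_const hr0.le).comp continuous_abs).measurable.comp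
      ((hg.measurable.comp (hfkm k)).sub (hg.measurable.comp hfm))
  have hGm : ∀ k, Measurable (G' k) := by
    intro k
    exact ((((habs _ (hfkm k)).const_mul c).ennreal_ofReal).add
      (((habs _ hfm).const_mul c).ennreal_ofReal)).add measurable_const
  have hle : ∀ k x, F' k x ≤ G' k x := by
    intro k x
    calc F' k x ≤ ENNReal.ofReal (c * (|fk k x| ^ q + |f x| ^ q) + d) :=
          ENNReal.ofReal_le_ofReal (hbound _ _)
      _ ≤ ENNReal.ofReal (c * (|fk k x| ^ q + |f x| ^ q)) + ENNReal.ofReal d :=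
          ENNReal.ofReal_add_le
      _ ≤ G' k x := by
          rw [hG']
          refine add_le_add ?_ (le_refl _)
          rw [mul_add]
          exact ENNReal.ofReal_add_le
  have hF0 : ∀ᵐ x ∂μ, Tendsto (fun k => F' k x) atTop (nhds 0) := by
    filter_upwards [hae] with x hx
    have h1 : Tendsto (fun k => g (fk k x)) atTop (nhds (g (f x))) :=
      (hg.tendsto (f x)).comp hx
    have h2 : Tendsto (fun k => g (fk k x) - g (f x)) atTop (nhds 0) := by
      have h2' := h1.sub (tendsto_const_nhds (x := g (f x)) (f := atTop (α := ℕ)))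
      rwa [sub_self] at h2'
    have hc2 : Continuous (fun s : ℝ => |s| ^ r) :=
      (Real.continuous_rpow_const hr0.le).comp continuous_abs
    have h3 := (hc2.tendsto _).comp h2
    rw [abs_zero, Real.zero_rpow hr0.ne'] at h3
    have h5 := (ENNReal.continuous_ofReal.tendsto _).comp h3
    simp only [ENNReal.ofReal_zero] at h5
    exact h5
  have hGtend : ∀ᵐ x ∂μ, Tendsto (fun k => G' k x) atTop (nhds (Gl' x)) := by
    filter_upwards [hae] with x hx
    have hcq : Continuous (fun s : ℝ => ENNReal.ofReal (c * |s| ^ q)) :=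
      ENNReal.continuous_ofReal.comp
        (continuous_const.mul ((Real.continuous_rpow_const hq0').comp continuous_abs))
    have h1 : Tendsto (fun k => ENNReal.ofReal (c * |fk k x| ^ q)) atTop
        (nhds (ENNReal.ofReal (c * |f x| ^ q))) := (hcq.tendsto _).comp hx
    exact (h1.add tendsto_const_nhds).add tendsto_const_nhds
  -- lintegral computations
  have hint1 : ∀ (h : (Fin n → ℝ) → ℝ), Measurable h →
      (∫⁻ x, ENNReal.ofReal (|h x| ^ q) ∂μ) = ENNReal.ofReal (∫ x in D, |h x| ^ q) → True := fun _ _ _ => trivial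
  have hGieq : ∀ k, (∫⁻ x, G' k x ∂μ) =
      ENNReal.ofReal c * ENNReal.ofReal (rk k) +
      ENNReal.ofReal c * ENNReal.ofReal rl + ENNReal.ofReal d * μ Set.univ := by
    intro k
    rw [hG']
    rw [lintegral_add_right _ measurable_const,
      lintegral_add_right _ (((habs _ hfm).const_mul c).ennreal_ofReal)]
    congr 1
    · congr 1
      · simp only [ENNReal.ofReal_mul hc0]
        rw [lintegral_const_mul _ ((habs _ (hfkm k)).ennreal_ofReal), hIk k]
      · simp only [ENNReal.ofReal_mul hc0]
        rw [lintegral_const_mul _ ((habs _ hfm).ennreal_ofReal), hIl]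
    · exact lintegral_const _
  have hGleq : (∫⁻ x, Gl' x ∂μ) =
      ENNReal.ofReal c * ENNReal.ofReal rl +
      ENNReal.ofReal c * ENNReal.ofReal rl + ENNReal.ofReal d * μ Set.univ := by
    rw [hGl']
    rw [lintegral_add_right _ measurable_const,
      lintegral_add_right _ (((habs _ hfm).const_mul c).ennreal_ofReal)]
    congr 1
    · congr 1 <;>
      · simp only [ENNReal.ofReal_mul hc0]
        rw [lintegral_const_mul _ ((habs _ hfm).ennreal_ofReal), hIl]
    · exact lintegral_const _
  have hμuniv : μ Set.univ = volume D := by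
    rw [hμ, Measure.restrict_apply_univ]
  have hfin : (∫⁻ x, Gl' x ∂μ) ≠ ⊤ := by
    rw [hGleq, hμuniv]
    refine ENNReal.add_ne_top.mpr ⟨ENNReal.add_ne_top.mpr ⟨?_, ?_⟩, ?_⟩ <;>
      exact ENNReal.mul_ne_top ENNReal.ofReal_ne_top (by first | exact ENNReal.ofReal_ne_top | exact hDfin.ne)
  have hGint : Tendsto (fun k => ∫⁻ x, G' k x ∂μ) atTop (nhds (∫⁻ x, Gl' x ∂μ)) := by
    simp only [hGieq, hGleq]
    refine Tendsto.add (Tendsto.add ?_ tendsto_const_nhds) tendsto_const_nhds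
    have h1 : Tendsto (fun k => ENNReal.ofReal (rk k)) atTop (nhds (ENNReal.ofReal rl)) :=
      (ENNReal.continuous_ofReal.tendsto _).comp hrkt
    exact ENNReal.Tendsto.const_mul h1 (Or.inr ENNReal.ofReal_ne_top)
  -- apply generalized DCT
  have hlin : Tendsto (fun k => ∫⁻ x, F' k x ∂μ) atTop (nhds 0) :=
    gdct hFm hGm hle hF0 hGtend hGint hfin
  -- convert back to real integrals
  have heq : ∀ k, ∫ x in D, |g (fk k x) - g (f x)| ^ r = (∫⁻ x, F' k x ∂μ).toReal := by
    intro k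
    exact integral_eq_lintegral_of_nonneg_ae (ae_of_all _ fun x => by positivity)
      (((Real.continuous_rpow_const hr0.le).comp continuous_abs).measurable.comp
        ((hg.measurable.comp (hfkm k)).sub (hg.measurable.comp hfm))).aestronglyMeasurable
  have hfinal := (ENNReal.tendsto_toReal (ENNReal.zero_ne_top)).comp hlin
  rw [show (0:ℝ≥0∞).toReal = 0 from rfl] at hfinal
  exact hfinal.congr fun k => (heq k).symm
end

section
/- Let n ≥ 2, let W : ℝ → ℝ be C¹ with W(0) = 0, let R₀ > 0, and let U : [0, ∞) → ℝ be C¹ on [0, ∞) and C² on (0, ∞), with U(R) = 0 for all R ≥ R₀, satisfying the codimension-n profile equation U''(R) + ((n−1)/R)·U'(R) = W'(U(R)) for all R > 0. Then for every R > 0, (1/2)·U'(R)² − (n−1)·∫_R^∞ U'(s)²/s ds = W(U(R)). -/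
open MeasureTheory

/-- first integral identity for the codimension-`n` micelle profile. -/
theorem stmt_11 (n : ℕ) (hn : 2 ≤ n)
    (W : ℝ → ℝ) (hW : ContDiff ℝ 1 W) (hW0 : W 0 = 0)
    (R₀ : ℝ) (hR₀ : 0 < R₀) (U : ℝ → ℝ)
    (hU1 : ContDiffOn ℝ 1 U (Set.Ici 0)) (hU2 : ContDiffOn ℝ 2 U (Set.Ioi 0))
    (hUsupp : ∀ R : ℝ, R₀ ≤ R → U R = 0)
    (hODE : ∀ R : ℝ, 0 < R →
      deriv (deriv U) R + ((n - 1 : ℝ) / R) * deriv U R = deriv W (U R)) :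
    ∀ R : ℝ, 0 < R →
      (1 / 2) * (deriv U R) ^ 2 - (n - 1 : ℝ) * (∫ s in Set.Ioi R, (deriv U s) ^ 2 / s)
        = W (U R) := by
  have hopen : IsOpen (Set.Ioi (0:ℝ)) := isOpen_Ioi
  -- deriv U is C¹ on Ioi 0
  have hdU : ContDiffOn ℝ 1 (deriv U) (Set.Ioi 0) :=
    hU2.deriv_of_isOpen hopen (by norm_num)
  have hdUcont : ContinuousOn (deriv U) (Set.Ioi 0) := hdU.continuousOn
  -- U is differentiable at every point of Ioi 0
  have hU' : ∀ x : ℝ, 0 < x → HasDerivAt U (deriv U x) x := by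
    intro x hx
    exact (((hU2.contDiffAt (hopen.mem_nhds hx)).differentiableAt
      (by norm_num))).hasDerivAt
  have hU'' : ∀ x : ℝ, 0 < x → HasDerivAt (deriv U) (deriv (deriv U) x) x := by
    intro x hx
    exact ((hdU.contDiffAt (hopen.mem_nhds hx)).differentiableAt one_ne_zero).hasDerivAt
  -- deriv U vanishes on Ici R₀
  have hzero' : ∀ s : ℝ, R₀ < s → deriv U s = 0 := by
    intro s hs
    have : U =ᶠ[nhds s] (fun _ => (0:ℝ)) := by
      filter_upwards [isOpen_Ioi.mem_nhds hs] with t ht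
      exact hUsupp t (le_of_lt ht)
    rw [this.deriv_eq]; simp
  have hzero : ∀ s : ℝ, R₀ ≤ s → deriv U s = 0 := by
    intro s hs
    rcases eq_or_lt_of_le hs with h | h
    · rw [← h]
      have hc : ContinuousAt (deriv U) R₀ := hdUcont.continuousAt (hopen.mem_nhds hR₀)
      have h1 : Filter.Tendsto (deriv U) (nhdsWithin R₀ (Set.Ioi R₀)) (nhds (deriv U R₀)) :=
        hc.tendsto.mono_left nhdsWithin_le_nhds
      have h2 : Filter.Tendsto (deriv U) (nhdsWithin R₀ (Set.Ioi R₀)) (nhds 0) := by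
        apply Filter.Tendsto.congr' _ tendsto_const_nhds
        filter_upwards [self_mem_nhdsWithin] with t ht
        exact (hzero' t ht).symm
      exact tendsto_nhds_unique h1 h2
    · exact hzero' s h
  set f : ℝ → ℝ := fun s => (deriv U s) ^ 2 / s with hf
  have hfcont : ContinuousOn f (Set.Ioi 0) := by
    apply (hdUcont.pow 2).div continuousOn_id
    intro x hx; exact ne_of_gt hx
  have hfzero : ∀ s : ℝ, R₀ ≤ s → f s = 0 := by
    intro s hs; simp [hf, hzero s hs]
  -- interval integrability
  have hII : ∀ a b : ℝ, 0 < a → 0 < b → IntervalIntegrable f volume a b := by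
    intro a b ha hb
    apply (hfcont.mono _).intervalIntegrable
    intro x hx
    have := hx.1
    rcases le_total a b with h | h
    · rw [Set.uIcc_of_le h] at hx; exact lt_of_lt_of_le ha hx.1
    · rw [Set.uIcc_of_ge h] at hx; exact lt_of_lt_of_le hb hx.1
  -- identify the Ioi integral with an interval integral
  have hIoi_eq : ∀ R : ℝ, 0 < R → ∫ s in Set.Ioi R, f s = ∫ s in R..R₀, f s := by
    intro R hR
    rcases le_total R R₀ with h | h
    · have hsplit : Set.Ioc R R₀ ∪ Set.Ioi R₀ = Set.Ioi R := Set.Ioc_union_Ioi_eq_Ioi h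
      have hint1 : IntegrableOn f (Set.Ioc R R₀) := (hII R R₀ hR hR₀).1
      have hint2 : IntegrableOn f (Set.Ioi R₀) := by
        apply MeasureTheory.IntegrableOn.congr_fun (integrableOn_zero)
          (fun s hs => (hfzero s (le_of_lt hs)).symm) measurableSet_Ioi
      have hdisj : Disjoint (Set.Ioc R R₀) (Set.Ioi R₀) := by
        apply Set.disjoint_left.2
        intro x hx1 hx2
        exact absurd hx1.2 (not_le.2 hx2)
      rw [← hsplit, setIntegral_union hdisj measurableSet_Ioi hint1 hint2]
      have hz : ∫ s in Set.Ioi R₀, f s = 0 := by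
        apply setIntegral_eq_zero_of_forall_eq_zero
        intro x hx; exact hfzero x (le_of_lt hx)
      rw [hz, add_zero, intervalIntegral.integral_of_le h]
    · have h1 : ∫ s in Set.Ioi R, f s = 0 := by
        apply setIntegral_eq_zero_of_forall_eq_zero
        intro x hx; exact hfzero x (le_trans h (le_of_lt hx))
      have h2 : ∫ s in R..R₀, f s = 0 := by
        rw [intervalIntegral.integral_symm, intervalIntegral.integral_of_le h]
        have : ∫ s in Set.Ioc R₀ R, f s = 0 := by
          apply setIntegral_eq_zero_of_forall_eq_zero
          intro x hx; exact hfzero x (le_of_lt hx.1)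
        rw [this]; ring
      rw [h1, h2]
  -- FTC: derivative of the interval integral
  have hJ : ∀ x : ℝ, 0 < x → HasDerivAt (fun y => ∫ s in y..R₀, f s) (-(f x)) x := by
    intro x hx
    have heq : (fun y => ∫ s in y..R₀, f s) = fun y => -(∫ s in R₀..y, f s) := by
      funext y; rw [intervalIntegral.integral_symm]
    rw [heq]
    apply HasDerivAt.neg
    apply intervalIntegral.integral_hasDerivAt_right (hII R₀ x hR₀ hx)
    · exact hfcont.stronglyMeasurableAtFilter hopen x hx
    · exact hfcont.continuousAt (hopen.mem_nhds hx)
  -- the energy function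
  set G : ℝ → ℝ := fun x =>
    (1 / 2) * (deriv U x) ^ 2 - W (U x) - (n - 1 : ℝ) * ∫ s in x..R₀, f s with hG
  have hG' : ∀ x : ℝ, 0 < x → HasDerivAt G 0 x := by
    intro x hx
    have h1 : HasDerivAt (fun y => (1 / 2 : ℝ) * (deriv U y) ^ 2)
        ((1 / 2) * (2 * deriv U x ^ 1 * deriv (deriv U) x)) x :=
      ((hU'' x hx).pow 2).const_mul (1 / 2)
    have hWd : HasDerivAt W (deriv W (U x)) (U x) :=
      ((hW.differentiable one_ne_zero) (U x)).hasDerivAt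
    have h2 : HasDerivAt (fun y => W (U y)) (deriv W (U x) * deriv U x) x :=
      hWd.comp x (hU' x hx)
    have h3 := ((h1.sub h2).sub ((hJ x hx).const_mul ((n:ℝ) - 1)))
    have hcalc : (1 / 2) * (2 * deriv U x ^ 1 * deriv (deriv U) x)
        - deriv W (U x) * deriv U x - ((n:ℝ) - 1) * -(f x) = 0 := by
      have hode := hODE x hx
      have hd2 : deriv (deriv U) x = deriv W (U x) - ((n - 1 : ℝ) / x) * deriv U x := by
        linarith
      rw [hd2]
      simp only [hf]
      field_simp
      ring
    rw [hcalc] at h3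
    exact h3
  have hkey : ∀ a b : ℝ, 0 < a → a ≤ b → G a = G b := by
    intro a b ha hab
    have hcont : ContinuousOn G (Set.Icc a b) := by
      intro x hx
      exact ((hG' x (lt_of_lt_of_le ha hx.1)).continuousAt).continuousWithinAt
    have hder : ∀ x ∈ Set.Ico a b, HasDerivWithinAt G 0 (Set.Ici x) x := by
      intro x hx
      exact (hG' x (lt_of_lt_of_le ha hx.1)).hasDerivWithinAt
    exact (constant_of_has_deriv_right_zero hcont hder b ⟨hab, le_rfl⟩).symm
  -- G vanishes at large radii
  have hGT : ∀ T : ℝ, R₀ ≤ T → G T = 0 := by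
    intro T hT
    have hU0 : U T = 0 := hUsupp T hT
    have hd0 : deriv U T = 0 := hzero T hT
    have hint0 : ∫ s in T..R₀, f s = 0 := by
      rw [intervalIntegral.integral_symm, intervalIntegral.integral_of_le hT]
      have : ∫ s in Set.Ioc R₀ T, f s = 0 := by
        apply setIntegral_eq_zero_of_forall_eq_zero
        intro x hx; exact hfzero x (le_of_lt hx.1)
      rw [this]; ring
    simp [hG, hU0, hd0, hW0, hint0]
  intro R hR
  have hGR : G R = 0 := by
    rcases le_total R R₀ with h | h
    · rw [hkey R R₀ hR h]; exact hGT R₀ le_rfl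
    · exact hGT R h
  have := hIoi_eq R hR
  simp only [hG] at hGR
  simp only [hf] at this ⊢
  rw [this]
  linarith
end

section
/- Let n ≥ 2, let W : ℝ → ℝ be C¹ with W(0) = 0, let R₀ > 0, and let U : [0, ∞) → ℝ be C² with U'(0) = 0 and U(R) = 0 for all R ≥ R₀, satisfying the codimension-n profile equation U''(R) + ((n−1)/R)·U'(R) = W'(U(R)) for all R > 0. Then ∫_0^∞ W(U(R))·R^{n−1} dR = ((2−n)/(2n))·∫_0^∞ U'(R)²·R^{n−1} dR. -/
open MeasureTheory

/-- virial-type identity relating the potential and kinetic parts of the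
codimension-`n` micelle profile energy. -/
theorem stmt_12 (n : ℕ) (hn : 2 ≤ n)
    (W : ℝ → ℝ) (hW : ContDiff ℝ 1 W) (hW0 : W 0 = 0)
    (R₀ : ℝ) (hR₀ : 0 < R₀) (U : ℝ → ℝ)
    (hU : ContDiffOn ℝ 2 U (Set.Ici 0))
    (hU'0 : derivWithin U (Set.Ici 0) 0 = 0)
    (hUsupp : ∀ R : ℝ, R₀ ≤ R → U R = 0)
    (hODE : ∀ R : ℝ, 0 < R →
      deriv (deriv U) R + ((n - 1 : ℝ) / R) * deriv U R = deriv W (U R)) :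
    (∫ R in Set.Ioi (0 : ℝ), W (U R) * R ^ (n - 1))
      = ((2 - n : ℝ) / (2 * n)) * ∫ R in Set.Ioi (0 : ℝ), (deriv U R) ^ 2 * R ^ (n - 1) := by
  set V : ℝ → ℝ := derivWithin U (Set.Ici 0) with hVdef
  have hnR : (0:ℝ) < n := by exact Nat.cast_pos.mpr (by omega)
  have hn1 : n - 1 + 1 = n := by omega
  -- V = deriv U on Ioi 0
  have hVd : ∀ R : ℝ, 0 < R → V R = deriv U R := fun R hR =>
    derivWithin_of_mem_nhds (Ici_mem_nhds hR)
  have hVc : ContinuousOn V (Set.Ici 0) :=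
    hU.continuousOn_derivWithin (uniqueDiffOn_Ici 0) one_le_two
  have hUc : ContinuousOn U (Set.Ici 0) := hU.continuousOn
  have hWc : Continuous W := hW.continuous
  have hU' : ∀ R : ℝ, 0 < R → HasDerivAt U (deriv U R) R := fun R hR =>
    ((hU.contDiffAt (Ici_mem_nhds hR)).differentiableAt two_ne_zero).hasDerivAt
  have hD2 : ContDiffOn ℝ 1 (deriv U) (Set.Ioi 0) :=
    (hU.mono Set.Ioi_subset_Ici_self).deriv_of_isOpen isOpen_Ioi (by norm_num)
  have hU'' : ∀ R : ℝ, 0 < R → HasDerivAt (deriv U) (deriv (deriv U) R) R := fun R hR =>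
    (((hD2.differentiableOn one_ne_zero) R hR).differentiableAt
      (isOpen_Ioi.mem_nhds hR)).hasDerivAt
  -- deriv U vanishes on Ici R₀
  have hU'supp : ∀ R : ℝ, R₀ ≤ R → deriv U R = 0 := by
    intro R hR
    have hRpos : 0 < R := lt_of_lt_of_le hR₀ hR
    have hc : HasDerivWithinAt U 0 (Set.Ici R) R := by
      have : HasDerivWithinAt (fun _ : ℝ => (0:ℝ)) 0 (Set.Ici R) R :=
        hasDerivWithinAt_const R _ 0
      exact this.congr (fun x hx => hUsupp x (le_trans hR hx)) (hUsupp R hR)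
    have hd : HasDerivWithinAt U (deriv U R) (Set.Ici R) R :=
      (hU' R hRpos).hasDerivWithinAt
    exact (uniqueDiffOn_Ici R R Set.self_mem_Ici).eq_deriv _ hd hc
  -- F and its derivative f'
  set F : ℝ → ℝ := fun R => R ^ n * ((V R) ^ 2 / 2 - W (U R)) with hFdef
  set f' : ℝ → ℝ := fun R => ((2 - (n:ℝ)) / 2 * (V R) ^ 2 - n * W (U R)) * R ^ (n - 1)
    with hf'def
  have hFc : ContinuousOn F (Set.Icc 0 R₀) := by
    apply ContinuousOn.mono _ (Set.Icc_subset_Ici_self)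
    exact (continuous_pow n).continuousOn.mul
      (((hVc.pow 2).div_const 2).sub (hWc.comp_continuousOn hUc))
  have hf'c : ContinuousOn f' (Set.Icc 0 R₀) := by
    apply ContinuousOn.mono _ (Set.Icc_subset_Ici_self)
    exact ((continuousOn_const.mul (hVc.pow 2)).sub
      (continuousOn_const.mul (hWc.comp_continuousOn hUc))).mul
      (continuous_pow (n-1)).continuousOn
  have hderiv : ∀ R ∈ Set.Ioo 0 R₀, HasDerivAt F (f' R) R := by
    intro R hR
    obtain ⟨hR0, _⟩ := hR
    have hRne : R ≠ 0 := ne_of_gt hR0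
    set v := deriv U R
    set u'' := deriv (deriv U) R
    set w := W (U R)
    set c := deriv W (U R)
    have hGd : HasDerivAt (fun r => r ^ n * ((deriv U r) ^ 2 / 2 - W (U r)))
        ((n * R ^ (n-1)) * ((deriv U R) ^ 2 / 2 - W (U R))
          + R ^ n * ((2 * deriv U R ^ 1 * u'') / 2 - c * v)) R := by
      have h1 : HasDerivAt (fun r : ℝ => r ^ n) ((n:ℝ) * R ^ (n-1)) R := hasDerivAt_pow n R
      have h2 : HasDerivAt (fun r => (deriv U r) ^ 2 / 2)
          ((2 * deriv U R ^ 1 * u'') / 2) R := by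
        have := (hU'' R hR0).pow 2
        simpa using this.div_const 2
      have h3 : HasDerivAt (fun r => W (U r)) (c * v) R := by
        have hWy : HasDerivAt W (deriv W (U R)) (U R) :=
          (hW.differentiable one_ne_zero (U R)).hasDerivAt
        exact hWy.comp R (hU' R hR0)
      exact h1.mul (h2.sub h3)
    have hFG : F =ᶠ[nhds R] fun r => r ^ n * ((deriv U r) ^ 2 / 2 - W (U r)) := by
      filter_upwards [isOpen_Ioi.mem_nhds (show R ∈ Set.Ioi (0:ℝ) from hR0)] with r hr
      simp only [hFdef, hVd r hr]
    have hF : HasDerivAt F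
        ((n * R ^ (n-1)) * ((deriv U R) ^ 2 / 2 - W (U R))
          + R ^ n * ((2 * deriv U R ^ 1 * u'') / 2 - c * v)) R :=
      hGd.congr_of_eventuallyEq hFG
    convert hF using 1
    -- algebra with ODE
    have hode : u'' + ((n - 1 : ℝ) / R) * v = c := hODE R hR0
    have hu'' : u'' = c - ((n - 1 : ℝ) / R) * v := by linarith
    have hRn : R ^ n = R ^ (n-1) * R := by rw [← pow_succ, hn1]
    simp only [hf'def, hVd R hR0, hu'', hRn]
    field_simp
    ring
  -- FTC
  have hint : IntervalIntegrable f' volume 0 R₀ := by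
    apply ContinuousOn.intervalIntegrable
    rwa [Set.uIcc_of_le hR₀.le]
  have hFTC : ∫ R in (0:ℝ)..R₀, f' R = F R₀ - F 0 :=
    intervalIntegral.integral_eq_sub_of_hasDeriv_right_of_le hR₀.le hFc
      (fun x hx => ((hderiv x hx).hasDerivWithinAt)) hint
  have hF0 : F 0 = 0 := by simp [hFdef, zero_pow (by omega : n ≠ 0)]
  have hVR₀ : V R₀ = 0 := by rw [hVd R₀ hR₀]; exact hU'supp R₀ le_rfl
  have hFR₀ : F R₀ = 0 := by
    simp [hFdef, hVR₀, hUsupp R₀ le_rfl, hW0]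
  have hFTC0 : ∫ R in Set.Ioc (0:ℝ) R₀, f' R = 0 := by
    rw [← intervalIntegral.integral_of_le hR₀.le, hFTC, hF0, hFR₀, sub_zero]
  -- integrability of the two pieces on Ioc 0 R₀
  have hWint : IntegrableOn (fun R => W (U R) * R ^ (n-1)) (Set.Ioc 0 R₀) := by
    apply ((ContinuousOn.mul (hWc.comp_continuousOn hUc)
      (continuous_pow (n-1)).continuousOn).mono
        Set.Icc_subset_Ici_self).integrableOn_Icc.mono_set Set.Ioc_subset_Icc_self
  have hVint : IntegrableOn (fun R => (V R) ^ 2 * R ^ (n-1)) (Set.Ioc 0 R₀) := by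
    apply (((hVc.pow 2).mul (continuous_pow (n-1)).continuousOn).mono
      Set.Icc_subset_Ici_self).integrableOn_Icc.mono_set Set.Ioc_subset_Icc_self
  -- linearity
  set A := ∫ R in Set.Ioc (0:ℝ) R₀, W (U R) * R ^ (n-1) with hA
  set B := ∫ R in Set.Ioc (0:ℝ) R₀, (V R) ^ 2 * R ^ (n-1) with hB
  have hlin : (2 - (n:ℝ)) / 2 * B - n * A = 0 := by
    have h1 : ∫ R in Set.Ioc (0:ℝ) R₀,
        ((2 - (n:ℝ)) / 2 * ((V R) ^ 2 * R ^ (n-1)) - n * (W (U R) * R ^ (n-1)))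
        = (2 - (n:ℝ)) / 2 * B - n * A := by
      rw [integral_sub (hVint.const_mul _) (hWint.const_mul _),
        integral_const_mul, integral_const_mul, hA, hB]
    have h2 : ∫ R in Set.Ioc (0:ℝ) R₀,
        ((2 - (n:ℝ)) / 2 * ((V R) ^ 2 * R ^ (n-1)) - n * (W (U R) * R ^ (n-1)))
        = ∫ R in Set.Ioc (0:ℝ) R₀, f' R := by
      apply setIntegral_congr_fun measurableSet_Ioc
      intro R _
      show ((2 - (n:ℝ)) / 2 * ((V R) ^ 2 * R ^ (n-1)) - n * (W (U R) * R ^ (n-1))) = f' R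
      simp only [hf'def]; ring
    rw [← h1, h2, hFTC0]
  -- reduce Ioi integrals to Ioc
  have hsplit := Set.Ioc_union_Ioi_eq_Ioi hR₀.le (a := (0:ℝ))
  have hdisj : Disjoint (Set.Ioc (0:ℝ) R₀) (Set.Ioi R₀) := Set.Ioc_disjoint_Ioi le_rfl
  have hWzero : ∀ R ∈ Set.Ioi R₀, W (U R) * R ^ (n-1) = 0 := by
    intro R hR
    rw [hUsupp R (le_of_lt hR), hW0, zero_mul]
  have hVzero : ∀ R ∈ Set.Ioi R₀, (deriv U R) ^ 2 * R ^ (n-1) = 0 := by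
    intro R hR
    rw [hU'supp R (le_of_lt hR)]; ring
  have hWtail : IntegrableOn (fun R => W (U R) * R ^ (n-1)) (Set.Ioi R₀) := by
    rw [integrableOn_congr_fun hWzero measurableSet_Ioi]
    exact integrableOn_zero
  have hVtail : IntegrableOn (fun R => (deriv U R) ^ 2 * R ^ (n-1)) (Set.Ioi R₀) := by
    rw [integrableOn_congr_fun hVzero measurableSet_Ioi]
    exact integrableOn_zero
  have hWIoi : (∫ R in Set.Ioi (0:ℝ), W (U R) * R ^ (n-1)) = A := by
    rw [← hsplit, setIntegral_union hdisj measurableSet_Ioi hWint hWtail,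
      setIntegral_congr_fun measurableSet_Ioi hWzero]
    simp [hA]
  have hBV : (∫ R in Set.Ioc (0:ℝ) R₀, (deriv U R) ^ 2 * R ^ (n-1)) = B := by
    rw [hB]
    apply setIntegral_congr_fun measurableSet_Ioc
    intro R hR
    show deriv U R ^ 2 * R ^ (n-1) = V R ^ 2 * R ^ (n-1)
    rw [hVd R hR.1]
  have hVIoi : (∫ R in Set.Ioi (0:ℝ), (deriv U R) ^ 2 * R ^ (n-1)) = B := by
    rw [← hsplit, setIntegral_union hdisj measurableSet_Ioi (hVint.congr_fun
      (fun R hR => (hVd R hR.1).symm ▸ rfl) measurableSet_Ioc) hVtail,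
      setIntegral_congr_fun measurableSet_Ioi hVzero, hBV]
    simp
  rw [hWIoi, hVIoi]
  have hnne : (n:ℝ) ≠ 0 := ne_of_gt hnR
  field_simp
  linarith
end

section
/- Let n ≥ 2, η₁, η₂ ∈ ℝ, let W : ℝ → ℝ be C¹ with W(0) = 0 and W'(0) = 0, let R₀ > 0, and let U : [0, ∞) → ℝ be C² with U'(0) = 0 and U(R) = 0 for all R ≥ R₀, satisfying the codimension-n profile equation U''(R) + ((n−1)/R)·U'(R) = W'(U(R)) for all R > 0, and such that x ↦ U(‖x‖) is C² on ℝⁿ. Let ε_j → 0⁺, let N_j ∈ ℕ, let α ≥ 0 with N_j·ε_j^{n−1} → α, and for each j let x_{j,1}, …, x_{j,N_j} ∈ ℝⁿ be points with ‖x_{j,k} − x_{j,k'}‖ > 2·ε_j·R₀ for all k ≠ k'. Define w_j : ℝⁿ → ℝ by w_j(x) := Σ_{k=1}^{N_j} U(‖x − x_{j,k}‖/ε_j). Then F_{ε_j}|_{ℝⁿ}(w_j) → −α·n·ω_n·( η₁/2 + ((2−n)/(2n))·η₂ )·σ_n as j → ∞, where ω_n is the Lebesgue measure of the unit ball in ℝⁿ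 and σ_n := ∫_0^∞ U'(R)²·R^{n−1} dR. -/
open MeasureTheory Filter

section aux

variable {n : ℕ}
local notation "E" => EuclideanSpace ℝ (Fin n)

lemma sum_collapse' {N : ℕ} {v : Fin N → ℝ} (f : ℝ → ℝ) (hf : f 0 = 0)
    (h : ∀ k k', v k ≠ 0 → v k' ≠ 0 → k = k') :
    f (∑ k, v k) = ∑ k, f (v k) := by
  by_cases hex : ∃ k, v k ≠ 0
  · obtain ⟨k₀, hk₀⟩ := hex
    have hz : ∀ k, k ≠ k₀ → v k = 0 := fun k hk => by
      by_contra hne; exact hk (h k k₀ hne hk₀)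
    have hsum : ∑ k, v k = v k₀ :=
      Finset.sum_eq_single_of_mem k₀ (Finset.mem_univ _) fun k _ hk => hz k hk
    have hsum2 : ∑ k, f (v k) = f (v k₀) :=
      Finset.sum_eq_single_of_mem k₀ (Finset.mem_univ _) fun k _ hk => by
        rw [hz k hk, hf]
    rw [hsum, hsum2]
  · push_neg at hex
    simp [hex, hf]

lemma hasFDerivAt_norm'' {y : E} (hy : y ≠ 0) :
    HasFDerivAt (fun x : E => ‖x‖) (‖y‖⁻¹ • (innerSL ℝ y)) y := by
  have hy2 : (‖y‖ : ℝ) ^ 2 ≠ 0 := pow_ne_zero 2 (norm_ne_zero_iff.2 hy)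
  have h2 : HasFDerivAt (fun x : E => ‖x‖ ^ 2) (2 • (innerSL ℝ y)) y :=
    (hasStrictFDerivAt_norm_sq y).hasFDerivAt
  have hs : HasDerivAt Real.sqrt (1 / (2 * Real.sqrt (‖y‖ ^ 2))) (‖y‖ ^ 2) :=
    Real.hasDerivAt_sqrt hy2
  have h := hs.comp_hasFDerivAt y h2
  simp only [Function.comp_def] at h
  have hnorm : (fun x : E => Real.sqrt (‖x‖ ^ 2)) = fun x : E => ‖x‖ := by
    funext x; rw [Real.sqrt_sq (norm_nonneg x)]
  rw [hnorm] at h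
  refine h.congr_fderiv ?_
  rw [Real.sqrt_sq (norm_nonneg y)]
  ext v
  simp only [ContinuousLinearMap.smul_apply, ContinuousLinearMap.coe_smul',
    Pi.smul_apply, smul_eq_mul]
  have : ‖y‖ ≠ 0 := norm_ne_zero_iff.2 hy
  field_simp
  ring

lemma hasFDerivAt_radial {f : ℝ → ℝ} {f' : ℝ} {y : E} (hy : y ≠ 0)
    (hf : HasDerivAt f f' ‖y‖) :
    HasFDerivAt (fun x : E => f ‖x‖) ((f' * ‖y‖⁻¹) • (innerSL ℝ y)) y := by
  have h := hf.comp_hasFDerivAt y (hasFDerivAt_norm'' hy)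
  rw [smul_smul] at h; exact h

lemma innerSL_single (y : E) (i : Fin n) :
    (innerSL ℝ y) (EuclideanSpace.single i 1) = y i := by
  simp [EuclideanSpace.inner_single_right]

lemma sum_sq_coords (y : E) : ∑ i, (y i) ^ 2 = ‖y‖ ^ 2 := by
  rw [EuclideanSpace.norm_eq, Real.sq_sqrt]
  · exact Finset.sum_congr rfl fun i _ => (sq_abs _).symm
  · positivity

lemma contDiff_pd {m : ℕ∞} {u : E → ℝ} (i : Fin n) (h : ContDiff ℝ (m + 1) u) :
    ContDiff ℝ m (pd i u) := by
  have h2 := (ContinuousLinearMap.apply ℝ ℝ (EuclideanSpace.single i 1)).contDiff.comp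
    (h.fderiv_right (le_refl _))
  exact h2



lemma pd_radial {f : ℝ → ℝ} {f' : ℝ} {y : E} (hy : y ≠ 0) (hf : HasDerivAt f f' ‖y‖)
    (i : Fin n) : pd i (fun x : E => f ‖x‖) y = f' * ‖y‖⁻¹ * y i := by
  rw [pd, (hasFDerivAt_radial hy hf).fderiv]
  simp [innerSL_single, mul_assoc]

lemma pd_pd_radial {U : ℝ → ℝ} (hd1 : ∀ s : ℝ, 0 < s → HasDerivAt U (deriv U s) s)
    {y : E} (hy : y ≠ 0)
    (hd2 : HasDerivAt (deriv U) (deriv (deriv U) ‖y‖) ‖y‖) (i : Fin n) :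
    pd i (fun x => pd i (fun z : E => U ‖z‖) x) y
      = deriv U ‖y‖ * ‖y‖⁻¹
        + (deriv (deriv U) ‖y‖ * ‖y‖⁻¹ + deriv U ‖y‖ * (-(‖y‖ ^ 2)⁻¹)) * ‖y‖⁻¹ * (y i) ^ 2 := by
  have hr : (‖y‖ : ℝ) ≠ 0 := norm_ne_zero_iff.2 hy
  set r := ‖y‖ with hrdef
  set q' : ℝ := deriv (deriv U) r * r⁻¹ + deriv U r * (-(r ^ 2)⁻¹) with hq'
  have hq : HasDerivAt (fun s : ℝ => deriv U s * s⁻¹) q' r := hd2.mul (hasDerivAt_inv hr)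
  have hA : HasFDerivAt (fun x : E => deriv U ‖x‖ * ‖x‖⁻¹) ((q' * r⁻¹) • (innerSL ℝ y)) y :=
    hasFDerivAt_radial hy hq
  have hB : HasFDerivAt (fun x : E => x i) (EuclideanSpace.proj i (𝕜 := ℝ)) y := by
    have := (EuclideanSpace.proj i (𝕜 := ℝ)).hasFDerivAt (x := y)
    convert this using 2 with z
    rfl
  have hF := hA.mul hB
  have hev : (fun x => pd i (fun z : E => U ‖z‖) x)
      =ᶠ[nhds y] fun x : E => (deriv U ‖x‖ * ‖x‖⁻¹) * x i := by
    filter_upwards [isOpen_compl_singleton.mem_nhds hy] with z hz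
    have hz0 : z ≠ 0 := hz
    rw [pd_radial hz0 (hd1 _ (norm_pos_iff.2 hz0)), mul_assoc]
  rw [show pd i (fun x => pd i (fun z : E => U ‖z‖) x) y
      = fderiv ℝ (fun x : E => (deriv U ‖x‖ * ‖x‖⁻¹) * x i) y (EuclideanSpace.single i 1) from by
    rw [pd, hev.fderiv_eq], HasFDerivAt.fderiv (f := fun x : E => (deriv U ‖x‖ * ‖x‖⁻¹) * x i) hF]
  simp only [ContinuousLinearMap.add_apply, ContinuousLinearMap.smul_apply, smul_eq_mul,
    innerSL_single]
  have hproj : (EuclideanSpace.proj i (𝕜 := ℝ)) (EuclideanSpace.single i 1) = 1 := by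
    simp
  rw [hproj]
  ring

lemma lap_radial {U : ℝ → ℝ}
    (hd1 : ∀ s : ℝ, 0 < s → HasDerivAt U (deriv U s) s)
    {y : E} (hy : y ≠ 0)
    (hd2 : HasDerivAt (deriv U) (deriv (deriv U) ‖y‖) ‖y‖) :
    lap (fun x : E => U ‖x‖) y
      = deriv (deriv U) ‖y‖ + ((n : ℝ) - 1) / ‖y‖ * deriv U ‖y‖ := by
  have hr : (‖y‖ : ℝ) ≠ 0 := norm_ne_zero_iff.2 hy
  rw [lap, Finset.sum_congr rfl fun i _ => pd_pd_radial hd1 hy hd2 i]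
  rw [Finset.sum_add_distrib, Finset.sum_const, ← Finset.mul_sum, sum_sq_coords]
  simp only [Finset.card_univ, Fintype.card_fin, nsmul_eq_mul]
  field_simp
  ring

lemma pd_comp_affine {ε : ℝ} {c : E} {u : E → ℝ} (hu : Differentiable ℝ u) (i : Fin n)
    (x : E) : pd i (fun z : E => u (ε⁻¹ • (z - c))) x = ε⁻¹ * pd i u (ε⁻¹ • (x - c)) := by
  have hA : HasFDerivAt (fun z : E => ε⁻¹ • (z - c))
      (ε⁻¹ • (ContinuousLinearMap.id ℝ E)) x :=
    ((hasFDerivAt_id x).sub_const c).const_smul ε⁻¹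
  have h := ((hu _).hasFDerivAt.comp x hA).fderiv
  simp only [Function.comp_def] at h
  rw [pd, h]
  simp [pd]

lemma pd_const_mul {a : ℝ} {u : E → ℝ} {x : E} (hu : DifferentiableAt ℝ u x) (i : Fin n) :
    pd i (fun z : E => a * u z) x = a * pd i u x := by
  rw [pd, fderiv_const_mul hu]; simp [pd]

lemma pd_sum {N : ℕ} {g : Fin N → E → ℝ} {x : E}
    (hg : ∀ k, DifferentiableAt ℝ (g k) x) (i : Fin n) :
    pd i (fun z : E => ∑ k, g k z) x = ∑ k, pd i (g k) x := by
  rw [pd, fderiv_fun_sum fun k _ => hg k]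
  simp [pd]

lemma lap_comp_affine {ε : ℝ} {c : E} {u : E → ℝ} (hu : ContDiff ℝ 2 u) (x : E) :
    lap (fun z : E => u (ε⁻¹ • (z - c))) x = ε⁻¹ * (ε⁻¹ * lap u (ε⁻¹ • (x - c))) := by
  have hu1 : Differentiable ℝ u := hu.differentiable (by norm_num)
  have hpdC1 : ∀ i : Fin n, ContDiff ℝ 1 (pd i u) := fun i =>
    contDiff_pd i (by exact_mod_cast hu)
  simp only [lap]
  rw [Finset.mul_sum, Finset.mul_sum]
  refine Finset.sum_congr rfl fun i _ => ?_
  have h1 : (fun z : E => pd i (fun w : E => u (ε⁻¹ • (w - c))) z)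
      = fun z : E => ε⁻¹ * pd i u (ε⁻¹ • (z - c)) := funext fun z => pd_comp_affine hu1 i z
  rw [h1]
  have hd : DifferentiableAt ℝ (fun z : E => pd i u (ε⁻¹ • (z - c))) x := by
    have : Differentiable ℝ (fun z : E => pd i u (ε⁻¹ • (z - c))) :=
      ((hpdC1 i).differentiable one_ne_zero).comp
        ((differentiable_id.sub_const c).const_smul ε⁻¹)
    exact this.differentiableAt
  rw [pd_const_mul hd i, pd_comp_affine ((hpdC1 i).differentiable one_ne_zero) i x]

lemma lap_sum {N : ℕ} {g : Fin N → E → ℝ} (hg : ∀ k, ContDiff ℝ 2 (g k)) (x : E) :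
    lap (fun z : E => ∑ k, g k z) x = ∑ k, lap (g k) x := by
  simp only [lap]
  have h1 : ∀ i : Fin n, (fun z : E => pd i (fun w : E => ∑ k, g k w) z)
      = fun z : E => ∑ k, pd i (g k) z := fun i => funext fun z =>
    pd_sum (fun k => ((hg k).differentiable (by norm_num)).differentiableAt) i
  calc ∑ i : Fin n, pd i (fun z : E => pd i (fun w : E => ∑ k, g k w) z) x
      = ∑ i : Fin n, ∑ k, pd i (fun z : E => pd i (g k) z) x := by
        refine Finset.sum_congr rfl fun i _ => ?_
        rw [h1 i]
        exact pd_sum (fun k =>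
          ((contDiff_pd (m := 1) i (by exact_mod_cast hg k)).differentiable one_ne_zero).differentiableAt) i
    _ = ∑ k, ∑ i : Fin n, pd i (fun z : E => pd i (g k) z) x := Finset.sum_comm


end aux

section Ulem
variable {U : ℝ → ℝ} {R₀ : ℝ}

/-- On `(0,∞)` the `derivWithin` over `Ici 0` agrees with `deriv`. -/
lemma gW_eq_deriv (s : ℝ) (hs : 0 < s) : derivWithin U (Set.Ici 0) s = deriv U s :=
  derivWithin_of_mem_nhds (Ici_mem_nhds hs)

variable (hU : ContDiffOn ℝ 2 U (Set.Ici 0))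
include hU

lemma U_hasDerivAt (s : ℝ) (hs : 0 < s) : HasDerivAt U (deriv U s) s := by
  have h1 : ContDiffAt ℝ 2 U s := hU.contDiffAt (Ici_mem_nhds hs)
  exact (h1.differentiableAt (by norm_num)).hasDerivAt

lemma derivU_contDiffAt (s : ℝ) (hs : 0 < s) : ContDiffAt ℝ 1 (deriv U) s := by
  have h1 : ContDiffAt ℝ 2 U s := hU.contDiffAt (Ici_mem_nhds hs)
  have h2 : ContDiffAt ℝ 1 (fderiv ℝ U) s := h1.fderiv_right (by norm_num)
  have h3 : ContDiffAt ℝ 1 (fun t => fderiv ℝ U t 1) s :=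
    (ContinuousLinearMap.apply ℝ ℝ (1 : ℝ)).contDiff.contDiffAt.comp s h2
  exact h3

lemma derivU_hasDerivAt (s : ℝ) (hs : 0 < s) :
    HasDerivAt (deriv U) (deriv (deriv U) s) s :=
  (((derivU_contDiffAt hU s hs).differentiableAt one_ne_zero)).hasDerivAt

lemma gW_cont : ContinuousOn (derivWithin U (Set.Ici 0)) (Set.Ici 0) :=
  hU.continuousOn_derivWithin (uniqueDiffOn_Ici 0) (by norm_num)

variable (hR₀ : 0 < R₀) (hUsupp : ∀ R : ℝ, R₀ ≤ R → U R = 0)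
include hR₀ hUsupp

lemma derivU_zero (R : ℝ) (hR : R₀ ≤ R) : deriv U R = 0 := by
  rcases eq_or_lt_of_le hR with heq | hR'
  · -- boundary case via continuity of derivWithin
    subst heq
    have hg : ContinuousWithinAt (derivWithin U (Set.Ici 0)) (Set.Ici 0) R₀ :=
      (gW_cont hU) R₀ hR₀.le
    have h1 : Tendsto (derivWithin U (Set.Ici 0)) (nhdsWithin R₀ (Set.Ioi R₀))
        (nhds (derivWithin U (Set.Ici 0) R₀)) := by
      refine hg.tendsto.mono_left (nhdsWithin_mono R₀ ?_)
      exact fun t ht => le_of_lt (lt_of_le_of_lt hR₀.le ht)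
    have h2 : Tendsto (derivWithin U (Set.Ici 0)) (nhdsWithin R₀ (Set.Ioi R₀)) (nhds 0) := by
      apply Tendsto.congr' _ tendsto_const_nhds
      filter_upwards [self_mem_nhdsWithin] with t ht
      have ht0 : (0:ℝ) < t := lt_trans hR₀ ht
      rw [gW_eq_deriv t ht0]
      have hev : U =ᶠ[nhds t] fun _ => (0:ℝ) := by
        filter_upwards [Ioi_mem_nhds ht] with s hs
        exact hUsupp s (le_of_lt hs)
      rw [hev.deriv_eq, deriv_const]
    have := tendsto_nhds_unique h1 h2
    rw [← gW_eq_deriv R₀ hR₀, this]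
  · have hev : U =ᶠ[nhds R] fun _ => (0:ℝ) := by
      filter_upwards [Ioi_mem_nhds hR'] with s hs
      exact hUsupp s (le_of_lt hs)
    rw [hev.deriv_eq, deriv_const]

end Ulem

section Vlem
variable {n : ℕ} {U : ℝ → ℝ}
local notation "E" => EuclideanSpace ℝ (Fin n)

/-- The gradient of a radial (even) `C¹` function vanishes at the origin. -/
lemma fderiv_V_zero (hUC2 : ContDiff ℝ 2 (fun x : E => U ‖x‖)) :
    fderiv ℝ (fun x : E => U ‖x‖) 0 = 0 := by
  set V : E → ℝ := fun x => U ‖x‖ with hV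
  set D := fderiv ℝ V 0 with hD
  have hdiff : DifferentiableAt ℝ V 0 := (hUC2.differentiable (by norm_num)).differentiableAt
  have hL : HasFDerivAt (fun z : E => -z) (-(ContinuousLinearMap.id ℝ E)) (0 : E) := by
    have := (-(ContinuousLinearMap.id ℝ E)).hasFDerivAt (x := (0 : E))
    convert this using 2
    simp
  have hVat : HasFDerivAt V D (-(0:E)) := by rw [neg_zero]; exact hdiff.hasFDerivAt
  have hcomp : HasFDerivAt (fun z : E => V (-z)) (D.comp (-(ContinuousLinearMap.id ℝ E)))
      (0 : E) := HasFDerivAt.comp (0 : E) hVat hL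
  have hVeven : (fun z : E => V (-z)) = V := by
    funext z; simp [hV, norm_neg]
  rw [hVeven] at hcomp
  have huniq : D = D.comp (-(ContinuousLinearMap.id ℝ E)) := by
    rw [hD, ← hcomp.fderiv]
  ext v
  have hv := congrArg (fun L : E →L[ℝ] ℝ => L v) huniq
  simp only [ContinuousLinearMap.comp_apply, ContinuousLinearMap.neg_apply,
    ContinuousLinearMap.coe_id', id, map_neg] at hv
  have : D v = 0 := by linarith
  simpa using this

lemma pd_V (hU : ContDiffOn ℝ 2 U (Set.Ici 0)) (hUC2 : ContDiff ℝ 2 (fun x : E => U ‖x‖))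
    (x : E) (i : Fin n) :
    pd i (fun z : E => U ‖z‖) x = derivWithin U (Set.Ici 0) ‖x‖ * ‖x‖⁻¹ * x i := by
  rcases eq_or_ne x 0 with rfl | hx
  · rw [pd, fderiv_V_zero hUC2]; simp
  · have h0 : (0:ℝ) < ‖x‖ := norm_pos_iff.2 hx
    rw [pd_radial hx (U_hasDerivAt hU _ h0) i, gW_eq_deriv _ h0]

lemma lap_V {W : ℝ → ℝ} (hn : 1 ≤ n) (hU : ContDiffOn ℝ 2 U (Set.Ici 0))
    (hUC2 : ContDiff ℝ 2 (fun x : E => U ‖x‖)) (hW : ContDiff ℝ 1 W)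
    (hODE : ∀ R : ℝ, 0 < R →
      deriv (deriv U) R + ((n - 1 : ℝ) / R) * deriv U R = deriv W (U R)) :
    ∀ x : E, lap (fun z : E => U ‖z‖) x = deriv W (U ‖x‖) := by
  haveI : Nonempty (Fin n) := ⟨⟨0, by omega⟩⟩
  haveI : Nontrivial (EuclideanSpace ℝ (Fin n)) := by
    refine ⟨EuclideanSpace.single ⟨0, by omega⟩ 1, 0, fun h => ?_⟩
    have := congrArg (fun v : EuclideanSpace ℝ (Fin n) => v ⟨0, by omega⟩) h
    simp [EuclideanSpace.single_apply] at this
  haveI := Module.punctured_nhds_neBot ℝ (EuclideanSpace ℝ (Fin n))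
  have c1 : Continuous (lap (fun z : E => U ‖z‖)) := by
    show Continuous fun x : E => ∑ i : Fin n, pd i (fun y => pd i (fun z : E => U ‖z‖) y) x
    refine continuous_finset_sum _ fun i _ => ?_
    have h1 : ContDiff ℝ 1 (pd i (fun z : E => U ‖z‖)) :=
      contDiff_pd i (by exact_mod_cast hUC2)
    have h0 : ContDiff ℝ 0 (pd i (pd i (fun z : E => U ‖z‖))) :=
      contDiff_pd i (by exact_mod_cast h1)
    exact h0.continuous
  have c2 : Continuous fun x : E => deriv W (U ‖x‖) :=
    (hW.continuous_deriv le_rfl).comp hUC2.continuous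
  have heq : Set.EqOn (lap (fun z : E => U ‖z‖)) (fun x : E => deriv W (U ‖x‖))
      {(0:E)}ᶜ := by
    intro y hy
    have hy0 : y ≠ 0 := hy
    have h0 : (0:ℝ) < ‖y‖ := norm_pos_iff.2 hy0
    rw [lap_radial (U_hasDerivAt hU) hy0 (derivU_hasDerivAt hU _ h0)]
    exact hODE ‖y‖ h0
  have := Continuous.ext_on (dense_compl_singleton (0:E)) c1 c2 heq
  exact fun x => congrFun this x

end Vlem

/-- the limiting FCH energy of a sequence of superpositions of disjointly
supported micelles is `−α·n·ω_n·(η₁/2 + ((2−n)/(2n))·η₂)·σ_n`. -/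
theorem stmt_15 (n : ℕ) (hn : 2 ≤ n) (η₁ η₂ : ℝ)
    (W : ℝ → ℝ) (hW : ContDiff ℝ 1 W) (hW0 : W 0 = 0) (hW'0 : deriv W 0 = 0)
    (R₀ : ℝ) (hR₀ : 0 < R₀) (U : ℝ → ℝ)
    (hU : ContDiffOn ℝ 2 U (Set.Ici 0))
    (hU'0 : derivWithin U (Set.Ici 0) 0 = 0)
    (hUsupp : ∀ R : ℝ, R₀ ≤ R → U R = 0)
    (hODE : ∀ R : ℝ, 0 < R →
      deriv (deriv U) R + ((n - 1 : ℝ) / R) * deriv U R = deriv W (U R))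
    (hUC2 : ContDiff ℝ 2 (fun x : EuclideanSpace ℝ (Fin n) => U ‖x‖))
    (ε : ℕ → ℝ) (hε : ∀ j, 0 < ε j) (hε0 : Tendsto ε atTop (nhds 0))
    (N : ℕ → ℕ) (α : ℝ) (hα : 0 ≤ α)
    (hNα : Tendsto (fun j => (N j : ℝ) * ε j ^ (n - 1)) atTop (nhds α))
    (x : (j : ℕ) → Fin (N j) → EuclideanSpace ℝ (Fin n))
    (hsep : ∀ j, ∀ k k' : Fin (N j), k ≠ k' → 2 * ε j * R₀ < ‖x j k - x j k'‖) :
    Tendsto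
      (fun j => FCH (ε j) η₁ η₂ W Set.univ
        (fun y => ∑ k : Fin (N j), U (‖y - x j k‖ / ε j)))
      atTop
      (nhds (-(α * n
        * (volume (Metric.ball (0 : EuclideanSpace ℝ (Fin n)) 1)).toReal
        * (η₁ / 2 + ((2 - n : ℝ) / (2 * n)) * η₂)
        * ∫ R in Set.Ioi (0 : ℝ), (deriv U R) ^ 2 * R ^ (n - 1)))) := by
  classical
  have hn1 : (1:ℕ) ≤ n := by omega
  haveI : Nonempty (Fin n) := ⟨⟨0, by omega⟩⟩
  set ω : ℝ := (volume (Metric.ball (0 : EuclideanSpace ℝ (Fin n)) 1)).toReal with hω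
  set g : ℝ → ℝ := derivWithin U (Set.Ici 0) with hgdef
  set σ : ℝ := ∫ R in Set.Ioi (0:ℝ), (deriv U R)^2 * R^(n-1) with hσ
  set A : ℝ := ∫ R in Set.Ioi (0:ℝ), R^(n-1) * (g R)^2 with hA
  set B : ℝ := ∫ R in Set.Ioi (0:ℝ), R^(n-1) * W (U R) with hB
  have hgcont : ContinuousOn g (Set.Ici 0) := gW_cont hU
  have hg_eq : ∀ s : ℝ, 0 < s → g s = deriv U s := fun s hs => gW_eq_deriv s hs
  have hdU0 : ∀ s : ℝ, R₀ ≤ s → deriv U s = 0 := derivU_zero hU hR₀ hUsupp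
  have hg0 : ∀ s : ℝ, R₀ ≤ s → g s = 0 := fun s hs => by
    rw [hg_eq s (lt_of_lt_of_le hR₀ hs)]; exact hdU0 s hs
  have hg00 : g 0 = 0 := hU'0
  have hUcont : ContinuousOn U (Set.Ici 0) := hU.continuousOn
  have hAσ : A = σ := by
    rw [hA, hσ]
    refine setIntegral_congr_fun measurableSet_Ioi fun s hs => ?_
    rw [hg_eq s hs]; ring
  have hWc : Continuous W := hW.continuous
  have hfg2 : ContinuousOn (fun s : ℝ => s^(n-1) * (g s)^2) (Set.Ici 0) :=
    (continuous_pow _).continuousOn.mul (hgcont.pow 2)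
  have hfWU : ContinuousOn (fun s : ℝ => s^(n-1) * W (U s)) (Set.Ici 0) :=
    (continuous_pow _).continuousOn.mul (hWc.comp_continuousOn hUcont)
  have hz2 : ∀ s : ℝ, R₀ < s → s^(n-1) * (g s)^2 = 0 := fun s hs => by
    rw [hg0 s hs.le]; ring
  have hzW : ∀ s : ℝ, R₀ < s → s^(n-1) * W (U s) = 0 := fun s hs => by
    rw [hUsupp s hs.le, hW0]; ring
  -- reduction of Ioi-integrals to interval integrals, plus integrability
  have hred : ∀ f : ℝ → ℝ, ContinuousOn f (Set.Ici 0) → (∀ s, R₀ < s → f s = 0) →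
      IntegrableOn f (Set.Ioi 0) ∧ (∫ s in Set.Ioi (0:ℝ), f s) = ∫ s in (0:ℝ)..R₀, f s := by
    intro f hc hz
    have hsplit : Set.Ioc (0:ℝ) R₀ ∪ Set.Ioi R₀ = Set.Ioi (0:ℝ) :=
      Set.Ioc_union_Ioi_eq_Ioi hR₀.le
    have hint1 : IntegrableOn f (Set.Ioc 0 R₀) :=
      ((hc.mono (Set.Icc_subset_Ici_self)).integrableOn_compact isCompact_Icc).mono_set
        Set.Ioc_subset_Icc_self
    have hzz : Set.EqOn f (fun _ => (0:ℝ)) (Set.Ioi R₀) := fun s hs => hz s hs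
    have hint2 : IntegrableOn f (Set.Ioi R₀) := by
      rw [integrableOn_congr_fun hzz measurableSet_Ioi]
      exact integrableOn_zero
    have hdisj : Disjoint (Set.Ioc (0:ℝ) R₀) (Set.Ioi R₀) := by
      rw [Set.disjoint_left]
      intro a ha ha'
      exact absurd ha.2 (not_le.2 ha')
    constructor
    · rw [← hsplit]; exact hint1.union hint2
    · rw [← hsplit, setIntegral_union hdisj measurableSet_Ioi hint1 hint2]
      have h0 : ∫ s in Set.Ioi R₀, f s = 0 := by
        rw [setIntegral_congr_fun measurableSet_Ioi hzz]
        simp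
      rw [h0, add_zero, intervalIntegral.integral_of_le hR₀.le]
  obtain ⟨hintA, hredA⟩ := hred _ hfg2 hz2
  obtain ⟨hintB, hredB⟩ := hred _ hfWU hzW
  -- Pohozaev identity
  have hpoh : B = ((2 - n : ℝ)/(2*n)) * A := by
    set Φ : ℝ → ℝ := fun r => W (U r) * r^n - (1/2) * (g r)^2 * r^n with hΦ
    have hΦc : ContinuousOn Φ (Set.Icc 0 R₀) := by
      apply ContinuousOn.sub
      · exact ((hWc.comp_continuousOn (hUcont.mono Set.Icc_subset_Ici_self)).mul
          (continuous_pow n).continuousOn)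
      · exact (continuousOn_const.mul ((hgcont.mono Set.Icc_subset_Ici_self).pow 2)).mul
          (continuous_pow n).continuousOn
    set ψ : ℝ → ℝ := fun r =>
      (n:ℝ) * (r^(n-1) * W (U r)) + ((n:ℝ)-2)/2 * (r^(n-1) * (g r)^2) with hψ
    have hΦd : ∀ r ∈ Set.Ioo 0 R₀, HasDerivAt Φ (ψ r) r := by
      intro r hr
      obtain ⟨hr0, hrR⟩ := hr
      have ha := U_hasDerivAt hU r hr0
      have hb := derivU_hasDerivAt hU r hr0
      have hWU : HasDerivAt (fun s => W (U s)) (deriv W (U r) * deriv U r) r :=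
        ((hW.differentiable one_ne_zero (U r)).hasDerivAt).comp r ha
      have hpow : HasDerivAt (fun s : ℝ => s^n) ((n:ℝ) * r^(n-1)) r := hasDerivAt_pow n r
      have hsq : HasDerivAt (fun s => (deriv U s)^2)
          (2 * deriv U r ^ 1 * deriv (deriv U) r) r := hb.pow 2
      have hΦ' : HasDerivAt (fun s => W (U s) * s^n - (1/2) * (deriv U s)^2 * s^n)
          ((deriv W (U r) * deriv U r) * r^n + W (U r) * ((n:ℝ) * r^(n-1))
            - (((1/2) * (2 * deriv U r ^ 1 * deriv (deriv U) r)) * r^n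
               + (1/2) * (deriv U r)^2 * ((n:ℝ) * r^(n-1)))) r :=
        (hWU.mul hpow).sub ((hsq.const_mul (1/2:ℝ)).mul hpow)
      have hev : Φ =ᶠ[nhds r] fun s => W (U s) * s^n - (1/2) * (deriv U s)^2 * s^n := by
        filter_upwards [Ioi_mem_nhds hr0] with s hs
        rw [hΦ]
        simp only
        rw [hg_eq s hs]
      have hd := hΦ'.congr_of_eventuallyEq hev
      refine hd.congr_deriv ?_
      have hODEr := hODE r hr0
      have hg_r : g r = deriv U r := hg_eq r hr0
      have hrn : (r:ℝ)^n = r^(n-1) * r := by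
        conv_lhs => rw [show n = (n-1)+1 by omega]
        rw [pow_succ]
      rw [hψ]
      simp only
      rw [hg_r, hrn, ← hODEr]
      have hrne : r ≠ 0 := ne_of_gt hr0
      field_simp
      ring
    have hψc : ContinuousOn ψ (Set.Icc 0 R₀) :=
      (continuousOn_const.mul (hfWU.mono Set.Icc_subset_Ici_self)).add
        (continuousOn_const.mul (hfg2.mono Set.Icc_subset_Ici_self))
    have hψint : IntervalIntegrable ψ volume 0 R₀ := by
      apply ContinuousOn.intervalIntegrable
      rwa [Set.uIcc_of_le hR₀.le]
    have hFTC := intervalIntegral.integral_eq_sub_of_hasDeriv_right_of_le hR₀.le hΦc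
        (fun r hr => (hΦd r hr).hasDerivWithinAt) hψint
    have hΦR : Φ R₀ = 0 := by
      rw [hΦ]; simp only; rw [hUsupp R₀ le_rfl, hW0, hg0 R₀ le_rfl]; ring
    have hΦ0 : Φ 0 = 0 := by
      rw [hΦ]; simp only; rw [zero_pow (by omega : n ≠ 0)]; ring
    rw [hΦR, hΦ0, sub_zero] at hFTC
    have hintW' : IntervalIntegrable (fun r => r^(n-1) * W (U r)) volume 0 R₀ := by
      apply ContinuousOn.intervalIntegrable
      rw [Set.uIcc_of_le hR₀.le]
      exact hfWU.mono Set.Icc_subset_Ici_self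
    have hintg' : IntervalIntegrable (fun r => r^(n-1) * (g r)^2) volume 0 R₀ := by
      apply ContinuousOn.intervalIntegrable
      rw [Set.uIcc_of_le hR₀.le]
      exact hfg2.mono Set.Icc_subset_Ici_self
    rw [hψ] at hFTC
    simp only at hFTC
    rw [intervalIntegral.integral_add (hintW'.const_mul _) (hintg'.const_mul _),
        intervalIntegral.integral_const_mul, intervalIntegral.integral_const_mul] at hFTC
    have hBv : B = ∫ s in (0:ℝ)..R₀, s^(n-1) * W (U s) := by rw [hB]; exact hredB
    have hAv : A = ∫ s in (0:ℝ)..R₀, s^(n-1) * (g s)^2 := by rw [hA]; exact hredA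
    rw [hBv, hAv]
    have hn0 : (n:ℝ) ≠ 0 := Nat.cast_ne_zero.2 (by omega)
    have h2n : (2:ℝ) * n ≠ 0 := by positivity
    field_simp
    linarith [hFTC]
  -- the exact value of the energy for each j
  have key : ∀ j, FCH (ε j) η₁ η₂ W Set.univ
      (fun y => ∑ k : Fin (N j), U (‖y - x j k‖ / ε j))
      = ((N j : ℝ) * ε j ^ (n-1)) * (-((n:ℝ) * ω * (η₁/2 + ((2-n:ℝ)/(2*n)) * η₂) * σ)) := by
    intro j
    have he : 0 < ε j := hε j
    set e : ℝ := ε j with he'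
    have hene : e ≠ 0 := ne_of_gt he
    set V : EuclideanSpace ℝ (Fin n) → ℝ := fun z => U ‖z‖ with hV
    have hVC2 : ContDiff ℝ 2 V := hUC2
    have hlapV : ∀ z, lap V z = deriv W (U ‖z‖) := lap_V (by omega) hU hUC2 hW hODE
    have hpdV : ∀ (z) (i : Fin n), pd i V z = g ‖z‖ * ‖z‖⁻¹ * z i := fun z i => pd_V hU hUC2 z i
    have hgradV : ∀ z : EuclideanSpace ℝ (Fin n), ∑ i, (pd i V z)^2 = (g ‖z‖)^2 := by
      intro z
      rcases eq_or_ne z 0 with rfl | hz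
      · have hz0 : ∀ i : Fin n, pd i V (0 : EuclideanSpace ℝ (Fin n)) = 0 := by
          intro i
          rw [hpdV]
          have : (0 : EuclideanSpace ℝ (Fin n)) i = 0 := rfl
          rw [this]; ring
        simp only [hz0]
        rw [norm_zero, hg00]
        simp
      · have hr : (0:ℝ) < ‖z‖ := norm_pos_iff.2 hz
        have hrne : ‖z‖ ≠ 0 := ne_of_gt hr
        calc ∑ i, (pd i V z)^2 = ∑ i, (g ‖z‖ * ‖z‖⁻¹)^2 * (z i)^2 := by
              refine Finset.sum_congr rfl fun i _ => ?_
              rw [hpdV z i]; ring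
          _ = (g ‖z‖)^2 := by
              rw [← Finset.mul_sum, sum_sq_coords]
              field_simp
    set c : Fin (N j) → EuclideanSpace ℝ (Fin n) := x j with hc
    set gk : Fin (N j) → EuclideanSpace ℝ (Fin n) → ℝ :=
      fun k z => U (‖z - c k‖ / e) with hgk
    have hnorm_eq : ∀ (k : Fin (N j)) (z : EuclideanSpace ℝ (Fin n)),
        ‖e⁻¹ • (z - c k)‖ = ‖z - c k‖ / e := by
      intro k z
      rw [norm_smul, Real.norm_eq_abs, abs_inv, abs_of_pos he]
      rw [div_eq_inv_mul]
    have hgkV : ∀ k, gk k = fun z => V (e⁻¹ • (z - c k)) := by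
      intro k; funext z
      rw [hgk, hV]
      simp only
      rw [hnorm_eq]
    have hgkC2 : ∀ k, ContDiff ℝ 2 (gk k) := by
      intro k; rw [hgkV k]
      exact hVC2.comp ((contDiff_id.sub contDiff_const).const_smul e⁻¹)
    have hpdgk : ∀ (k) (i : Fin n) (z), pd i (gk k) z = e⁻¹ * pd i V (e⁻¹ • (z - c k)) := by
      intro k i z
      rw [hgkV k]
      exact pd_comp_affine (hVC2.differentiable (by norm_num)) i z
    have hlapgk : ∀ k z, lap (gk k) z = e⁻¹ * (e⁻¹ * deriv W (U (‖z - c k‖ / e))) := by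
      intro k z
      rw [hgkV k, lap_comp_affine hVC2 z, hlapV, hnorm_eq]
    -- separation
    have hPuniq : ∀ (z : EuclideanSpace ℝ (Fin n)) (k k' : Fin (N j)),
        ‖z - c k‖ < e * R₀ → ‖z - c k'‖ < e * R₀ → k = k' := by
      intro z k k' h1 h2
      by_contra hne
      have hs := hsep j k k' hne
      have htri : ‖c k - c k'‖ ≤ ‖c k - z‖ + ‖z - c k'‖ := by
        have := dist_triangle (c k) z (c k')
        simpa [dist_eq_norm] using this
      rw [norm_sub_rev (c k) z] at htri
      have : (2:ℝ) * e * R₀ = e * R₀ + e * R₀ := by ring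
      rw [hc] at *
      linarith [hs]
    have hbig : ∀ (z : EuclideanSpace ℝ (Fin n)) (k : Fin (N j)),
        ¬(‖z - c k‖ < e * R₀) → R₀ ≤ ‖z - c k‖ / e := by
      intro z k h
      push_neg at h
      rw [le_div_iff₀ he]
      linarith
    have hUz : ∀ (z) (k : Fin (N j)), ¬(‖z - c k‖ < e * R₀) → U (‖z - c k‖ / e) = 0 :=
      fun z k h => hUsupp _ (hbig z k h)
    have hgz : ∀ (z) (k : Fin (N j)), ¬(‖z - c k‖ < e * R₀) → g (‖z - c k‖ / e) = 0 :=
      fun z k h => hg0 _ (hbig z k h)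
    have hpdz : ∀ (z) (k : Fin (N j)) (i : Fin n), ¬(‖z - c k‖ < e * R₀) →
        pd i (gk k) z = 0 := by
      intro z k i h
      rw [hpdgk, hpdV, hnorm_eq, hgz z k h]
      ring
    set w : EuclideanSpace ℝ (Fin n) → ℝ := fun y => ∑ k, gk k y with hw
    have hwC2 : ∀ k, ContDiff ℝ 2 (gk k) := hgkC2
    -- collapse identities
    have hcW' : ∀ z, deriv W (w z) = ∑ k, deriv W (U (‖z - c k‖ / e)) := by
      intro z
      exact sum_collapse' (deriv W) hW'0 (fun k k' h1 h2 =>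
        hPuniq z k k' (by by_contra hh; exact h1 (hUz z k hh))
          (by by_contra hh; exact h2 (hUz z k' hh)))
    have hcW : ∀ z, W (w z) = ∑ k, W (U (‖z - c k‖ / e)) := by
      intro z
      exact sum_collapse' W hW0 (fun k k' h1 h2 =>
        hPuniq z k k' (by by_contra hh; exact h1 (hUz z k hh))
          (by by_contra hh; exact h2 (hUz z k' hh)))
    have hlapw : ∀ z, lap w z = ∑ k, e⁻¹ * (e⁻¹ * deriv W (U (‖z - c k‖ / e))) := by
      intro z
      rw [hw]
      rw [lap_sum hgkC2 z]
      exact Finset.sum_congr rfl fun k _ => hlapgk k z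
    have hpdw : ∀ (i : Fin n) (z), pd i w z = ∑ k, pd i (gk k) z := by
      intro i z
      rw [hw]
      exact pd_sum (fun k => ((hgkC2 k).differentiable (by norm_num)).differentiableAt) i
    have hgradw : ∀ z, gradSq w z = ∑ k, (e⁻¹ * g (‖z - c k‖ / e))^2 := by
      intro z
      rw [gradSq]
      have h1 : ∀ i : Fin n, (pd i w z)^2 = ∑ k, (pd i (gk k) z)^2 := by
        intro i
        rw [hpdw i z]
        exact sum_collapse' (fun t => t^2) (by norm_num) (fun k k' h1 h2 =>
          hPuniq z k k' (by by_contra hh; exact h1 (hpdz z k i hh))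
            (by by_contra hh; exact h2 (hpdz z k' i hh)))
      rw [Finset.sum_congr rfl fun i _ => h1 i, Finset.sum_comm]
      refine Finset.sum_congr rfl fun k _ => ?_
      have h2 : ∀ i : Fin n, pd i (gk k) z = e⁻¹ * pd i V (e⁻¹ • (z - c k)) :=
        fun i => hpdgk k i z
      calc ∑ i, (pd i (gk k) z)^2
          = ∑ i, (e⁻¹)^2 * (pd i V (e⁻¹ • (z - c k)))^2 := by
            refine Finset.sum_congr rfl fun i _ => ?_
            rw [h2 i]; ring
        _ = (e⁻¹ * g (‖z - c k‖ / e))^2 := by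
            rw [← Finset.mul_sum, hgradV, hnorm_eq]
            ring
    -- pointwise integrand identity
    set φ : ℝ → ℝ := fun r => (η₁ * e / 2) * (e⁻¹ * g r)^2 + (η₂ / e) * W (U r) with hφ
    have hpt : ∀ z, (1 / (2 * e)) * (-(e * lap w z) + e⁻¹ * deriv W (w z)) ^ 2
        - ((η₁ * e / 2) * gradSq w z + (η₂ / e) * W (w z))
        = -∑ k, φ (‖z - c k‖ / e) := by
      intro z
      have h0 : -(e * lap w z) + e⁻¹ * deriv W (w z) = 0 := by
        rw [hlapw z, hcW' z, Finset.mul_sum, Finset.mul_sum]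
        rw [← Finset.sum_neg_distrib, ← Finset.sum_add_distrib]
        refine Finset.sum_eq_zero fun k _ => ?_
        field_simp
        ring
      rw [h0, hgradw z, hcW z]
      have hφk : ∀ k : Fin (N j), φ (‖z - c k‖ / e)
          = (η₁ * e / 2) * (e⁻¹ * g (‖z - c k‖ / e))^2
            + (η₂ / e) * W (U (‖z - c k‖ / e)) := fun k => rfl
      rw [Finset.sum_congr rfl fun k _ => hφk k, Finset.sum_add_distrib,
        ← Finset.mul_sum, ← Finset.mul_sum]
      ring
    -- integrability of each micelle contribution
    have hφcont : ∀ k : Fin (N j), Continuous fun z : EuclideanSpace ℝ (Fin n) =>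
        φ (‖z - c k‖ / e) := by
      intro k
      have h1 : Continuous fun z : EuclideanSpace ℝ (Fin n) => ‖z - c k‖ / e :=
        ((continuous_id.sub continuous_const).norm).div_const e
      have hmem : ∀ z : EuclideanSpace ℝ (Fin n), ‖z - c k‖ / e ∈ Set.Ici (0:ℝ) :=
        fun z => div_nonneg (norm_nonneg _) he.le
      have hgc : Continuous fun z : EuclideanSpace ℝ (Fin n) => g (‖z - c k‖ / e) :=
        hgcont.comp_continuous h1 hmem
      have hWUc : Continuous fun z : EuclideanSpace ℝ (Fin n) => W (U (‖z - c k‖ / e)) := by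
        have hUc : Continuous (gk k) := (hgkC2 k).continuous
        exact hWc.comp hUc
      simp only [hφ]
      exact (continuous_const.mul ((continuous_const.mul hgc).pow 2)).add
        (continuous_const.mul hWUc)
    have hφsupp : ∀ k : Fin (N j), HasCompactSupport fun z : EuclideanSpace ℝ (Fin n) =>
        φ (‖z - c k‖ / e) := by
      intro k
      apply HasCompactSupport.intro (isCompact_closedBall (c k) (e * R₀))
      intro z hz
      simp only [Metric.mem_closedBall, dist_eq_norm, not_le] at hz
      have hnl : ¬(‖z - c k‖ < e * R₀) := not_lt.2 hz.le
      simp only [hφ]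
      rw [hgz z k hnl, hUz z k hnl, hW0]
      ring
    have hφint : ∀ k : Fin (N j), Integrable
        (fun z : EuclideanSpace ℝ (Fin n) => φ (‖z - c k‖ / e)) volume :=
      fun k => (hφcont k).integrable_of_hasCompactSupport (hφsupp k)
    have hstep1 : FCH e η₁ η₂ W Set.univ w = -∑ k : Fin (N j), ∫ z, φ (‖z - c k‖ / e) := by
      rw [FCH, Measure.restrict_univ]
      rw [integral_congr_ae (Filter.Eventually.of_forall hpt)]
      rw [integral_neg, integral_finset_sum _ (fun k _ => hφint k)]
    have hIoi : (∫ r in Set.Ioi (0:ℝ), r^(n-1) * φ r)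
        = e⁻¹ * ((η₁/2) * A + η₂ * B) := by
      have h1 : ∀ r : ℝ, r^(n-1) * φ r
          = (e⁻¹ * (η₁/2)) * (r^(n-1) * (g r)^2) + (e⁻¹ * η₂) * (r^(n-1) * W (U r)) := by
        intro r
        simp only [hφ]
        field_simp
      simp only [h1]
      rw [integral_add (hintA.const_mul _) (hintB.const_mul _),
        integral_const_mul, integral_const_mul, ← hA, ← hB]
      ring
    have hval : ∀ k : Fin (N j), (∫ z, φ (‖z - c k‖ / e))
        = e^n * ((n:ℝ) * (ω * (e⁻¹ * ((η₁/2) * A + η₂ * B)))) := by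
      intro k
      have htrans : (∫ z, φ (‖z - c k‖ / e))
          = ∫ z : EuclideanSpace ℝ (Fin n), φ (‖z‖ / e) :=
        integral_sub_right_eq_self (fun z : EuclideanSpace ℝ (Fin n) => φ (‖z‖ / e)) (c k)
      have hscale := Measure.integral_comp_inv_smul_of_nonneg
        (volume : Measure (EuclideanSpace ℝ (Fin n))) (fun z => φ ‖z‖) he.le
      have hns : ∀ z : EuclideanSpace ℝ (Fin n), ‖e⁻¹ • z‖ = ‖z‖ / e := by
        intro z; rw [norm_smul, Real.norm_eq_abs, abs_inv, abs_of_pos he, div_eq_inv_mul]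
      simp only [hns, finrank_euclideanSpace_fin, smul_eq_mul] at hscale
      have hpolar := integral_fun_norm_addHaar
        (volume : Measure (EuclideanSpace ℝ (Fin n))) φ
      simp only [finrank_euclideanSpace_fin, nsmul_eq_mul, smul_eq_mul] at hpolar
      rw [htrans, hscale, hpolar, hIoi, hω]
      rfl
    -- assemble
    change FCH e η₁ η₂ W Set.univ w = _
    rw [hstep1, Finset.sum_congr rfl fun k _ => hval k,
      Finset.sum_const, Finset.card_univ, Fintype.card_fin, nsmul_eq_mul]
    rw [hpoh, hAσ]
    have hpow : e^n = e^(n-1) * e := by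
      conv_lhs => rw [show n = (n-1)+1 by omega]
      rw [pow_succ]
    rw [hpow]
    have hn0 : (n:ℝ) ≠ 0 := Nat.cast_ne_zero.2 (by omega)
    field_simp
  -- conclusion
  have hlim := hNα.mul_const (-((n:ℝ) * ω * (η₁/2 + ((2-n:ℝ)/(2*n)) * η₂) * σ))
  have hfun : (fun j => FCH (ε j) η₁ η₂ W Set.univ
      (fun y => ∑ k : Fin (N j), U (‖y - x j k‖ / ε j)))
      = fun j => ((N j : ℝ) * ε j ^ (n-1))
          * (-((n:ℝ) * ω * (η₁/2 + ((2-n:ℝ)/(2*n)) * η₂) * σ)) :=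
    funext key
  rw [hfun]
  convert hlim using 2
  ring
end
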